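/- Let F be the Minkowskian product of Finsler metrics F₁ and F₂ with respect to a product function f. Then at every point (x,y) = ((x₁,x₂),(y₁,y₂)) with y₁ ≠ 0 and y₂ ≠ 0, the Berwald connection coefficients Γ̌^α_{β;γ} = ∂²𝔾^α/∂y^β∂y^γ of F satisfy: Γ̌^i_{j;l}(x,y) = Γ̌₁^i_{j;l}(x₁,y₁), Γ̌^{i'}_{j';l'}(x,y) = Γ̌₂^{i'}_{j';l'}(x₂,y₂), and all mixed coefficients vanish: Γ̌^i_{j';l} = Γ̌^i_{j;l'} = Γ̌^i_{j';l'} = Γ̌^{i'}_{j';l} = Γ̌^{i'}_{j;l'} = Γ̌^{i'}_{j;l} = 0, where Γ̌₁ and Γ̌₂ are the Berwald connection coefficients of F₁ and F₂. -/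

import Mathlib

open Matrix

/-- Partial derivative in the fiber variable `y` in the direction of the `α`-th
coordinate, for a function `g (x, y)` of a base point and a fiber vector. -/
noncomputable def pdy {ι : Type*} [Fintype ι] [DecidableEq ι]
    (g : (ι → ℝ) → (ι → ℝ) → ℝ) (α : ι) : (ι → ℝ) → (ι → ℝ) → ℝ :=
  fun x y => fderiv ℝ (g x) y (Pi.single α 1)

/-- Partial derivative in the base variable `x` in the direction of the `γ`-th
coordinate, for a function `g (x, y)` of a base point and a fiber vector. -/
noncomputable def pdx {ι : Type*} [Fintype ι] [DecidableEq ι]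
    (g : (ι → ℝ) → (ι → ℝ) → ℝ) (γ : ι) : (ι → ℝ) → (ι → ℝ) → ℝ :=
  fun x y => fderiv ℝ (fun x' => g x' y) x (Pi.single γ 1)

/-- The fundamental tensor `(G_{αβ}) = (∂²(F²)/∂y^α∂y^β)` of a Finsler metric `F`. -/
noncomputable def fundTensor {ι : Type*} [Fintype ι] [DecidableEq ι]
    (F : (ι → ℝ) → (ι → ℝ) → ℝ) (x y : ι → ℝ) : Matrix ι ι ℝ :=
  fun α β => pdy (pdy (fun x' y' => (F x' y') ^ 2) β) α x y

/-- `F` is a Finsler metric on the open set `U`: `G = F²` is smooth on the slit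
domain, `F` is positive for `y ≠ 0`, absolutely 1-homogeneous in `y`, and its
fundamental tensor is positive definite for `y ≠ 0`. -/
structure IsFinslerMetric {ι : Type*} [Fintype ι] [DecidableEq ι]
    (U : Set (ι → ℝ)) (F : (ι → ℝ) → (ι → ℝ) → ℝ) : Prop where
  isOpen : IsOpen U
  smooth : ContDiffOn ℝ (⊤ : ℕ∞) (fun p : (ι → ℝ) × (ι → ℝ) => (F p.1 p.2) ^ 2)
    (U ×ˢ {y | y ≠ 0})
  pos : ∀ x ∈ U, ∀ y : ι → ℝ, y ≠ 0 → 0 < F x y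
  homog : ∀ x ∈ U, ∀ (y : ι → ℝ) (c : ℝ), F x (c • y) = |c| * F x y
  posDef : ∀ x ∈ U, ∀ y : ι → ℝ, y ≠ 0 → (fundTensor F x y).PosDef

/-- The geodesic spray coefficients
`𝔾^α = ½ G^{αβ}(∂²G/∂y^β∂x^γ · y^γ − ∂G/∂x^β)` of a Finsler metric `F`. -/
noncomputable def spray {ι : Type*} [Fintype ι] [DecidableEq ι]
    (F : (ι → ℝ) → (ι → ℝ) → ℝ) (α : ι) : (ι → ℝ) → (ι → ℝ) → ℝ :=
  fun x y => (1 / 2) * ∑ β, (fundTensor F x y)⁻¹ α β *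
    ((∑ γ, pdx (pdy (fun x' y' => (F x' y') ^ 2) β) γ x y * y γ) -
      pdx (fun x' y' => (F x' y') ^ 2) β x y)

/-- The Cartan nonlinear connection coefficients `Γ^α_β = ∂𝔾^α/∂y^β`. -/
noncomputable def nonlinConn {ι : Type*} [Fintype ι] [DecidableEq ι]
    (F : (ι → ℝ) → (ι → ℝ) → ℝ) (α β : ι) : (ι → ℝ) → (ι → ℝ) → ℝ :=
  pdy (spray F α) β

/-- The Berwald connection coefficients `Γ̌^α_{β;γ} = ∂Γ^α_γ/∂y^β = ∂²𝔾^α/∂y^β∂y^γ`. -/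
noncomputable def berwaldConn {ι : Type*} [Fintype ι] [DecidableEq ι]
    (F : (ι → ℝ) → (ι → ℝ) → ℝ) (α β γ : ι) : (ι → ℝ) → (ι → ℝ) → ℝ :=
  pdy (nonlinConn F α γ) β

/-- The Berwald curvature `B^α_{βγη} = ∂³𝔾^α/∂y^β∂y^γ∂y^η`. -/
noncomputable def berwaldCurv {ι : Type*} [Fintype ι] [DecidableEq ι]
    (F : (ι → ℝ) → (ι → ℝ) → ℝ) (α β γ η : ι) : (ι → ℝ) → (ι → ℝ) → ℝ :=
  pdy (pdy (pdy (spray F α) η) γ) β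

/-- The mean Berwald curvature `E_{βγ} = ½ B^α_{βγα}` (sum over `α`). -/
noncomputable def meanBerwaldCurv {ι : Type*} [Fintype ι] [DecidableEq ι]
    (F : (ι → ℝ) → (ι → ℝ) → ℝ) (β γ : ι) : (ι → ℝ) → (ι → ℝ) → ℝ :=
  fun x y => (1 / 2) * ∑ α, berwaldCurv F α β γ α x y

/-- The Landsberg curvature `L_{βγη} = −¼ y^ν G_{να} B^α_{βγη}` (sums over `ν, α`). -/
noncomputable def landsbergCurv {ι : Type*} [Fintype ι] [DecidableEq ι]
    (F : (ι → ℝ) → (ι → ℝ) → ℝ) (β γ η : ι) : (ι → ℝ) → (ι → ℝ) → ℝ :=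
  fun x y => -(1 / 4) * ∑ ν, ∑ α, y ν * fundTensor F x y ν α * berwaldCurv F α β γ η x y

/-- The mean Landsberg curvature `J_α = 2 G^{βγ} L_{αβγ}` (sums over `β, γ`). -/
noncomputable def meanLandsbergCurv {ι : Type*} [Fintype ι] [DecidableEq ι]
    (F : (ι → ℝ) → (ι → ℝ) → ℝ) (α : ι) : (ι → ℝ) → (ι → ℝ) → ℝ :=
  fun x y => 2 * ∑ β, ∑ γ, (fundTensor F x y)⁻¹ β γ * landsbergCurv F α β γ x y

/-- Partial derivative of `f : ℝ → ℝ → ℝ` with respect to the first variable. -/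
noncomputable def pderivS (f : ℝ → ℝ → ℝ) (s t : ℝ) : ℝ := deriv (fun u => f u t) s

/-- Partial derivative of `f : ℝ → ℝ → ℝ` with respect to the second variable. -/
noncomputable def pderivT (f : ℝ → ℝ → ℝ) (s t : ℝ) : ℝ := deriv (fun v => f s v) t

/-- `f_st = ∂²f/∂s∂t`. -/
noncomputable def pderivST (f : ℝ → ℝ → ℝ) (s t : ℝ) : ℝ :=
  deriv (fun u => pderivT f u t) s

/-- The data of a Minkowskian product: `F₁, F₂` are Finsler metrics on `U₁, U₂`,
`f` is an admissible product function, and `F = √(f(F₁², F₂²))` is the Minkowskian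
product metric, itself assumed to be a Finsler metric on `U₁ × U₂`. -/
structure IsMinkowskianProduct {m n : ℕ}
    (U₁ : Set (Fin m → ℝ)) (U₂ : Set (Fin n → ℝ))
    (F₁ : (Fin m → ℝ) → (Fin m → ℝ) → ℝ) (F₂ : (Fin n → ℝ) → (Fin n → ℝ) → ℝ)
    (f : ℝ → ℝ → ℝ)
    (F : (Fin m ⊕ Fin n → ℝ) → (Fin m ⊕ Fin n → ℝ) → ℝ) : Prop where
  finsler₁ : IsFinslerMetric U₁ F₁
  finsler₂ : IsFinslerMetric U₂ F₂
  f_cont : ContinuousOn (fun p : ℝ × ℝ => f p.1 p.2) (Set.Ici 0 ×ˢ Set.Ici 0)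
  f_nonneg : ∀ s ∈ Set.Ici (0 : ℝ), ∀ t ∈ Set.Ici (0 : ℝ), 0 ≤ f s t
  f_zero_iff : ∀ s ∈ Set.Ici (0 : ℝ), ∀ t ∈ Set.Ici (0 : ℝ),
    (f s t = 0 ↔ s = 0 ∧ t = 0)
  f_homog : ∀ c ∈ Set.Ici (0 : ℝ), ∀ s ∈ Set.Ici (0 : ℝ), ∀ t ∈ Set.Ici (0 : ℝ),
    f (c * s) (c * t) = c * f s t
  f_smooth : ContDiffOn ℝ (⊤ : ℕ∞) (fun p : ℝ × ℝ => f p.1 p.2)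
    (Set.Ioi 0 ×ˢ Set.Ioi 0)
  fs_ne : ∀ s > (0 : ℝ), ∀ t > (0 : ℝ), pderivS f s t ≠ 0
  ft_ne : ∀ s > (0 : ℝ), ∀ t > (0 : ℝ), pderivT f s t ≠ 0
  delta_ne : ∀ s > (0 : ℝ), ∀ t > (0 : ℝ),
    pderivS f s t * pderivT f s t - 2 * f s t * pderivST f s t ≠ 0
  F_def : ∀ (x y : Fin m ⊕ Fin n → ℝ),
    F x y = Real.sqrt (f ((F₁ (x ∘ Sum.inl) (y ∘ Sum.inl)) ^ 2)
      ((F₂ (x ∘ Sum.inr) (y ∘ Sum.inr)) ^ 2))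
  finsler : IsFinslerMetric
    {x : Fin m ⊕ Fin n → ℝ | (x ∘ Sum.inl) ∈ U₁ ∧ (x ∘ Sum.inr) ∈ U₂} F

section Bridge
variable {ι : Type*} [Fintype ι] [DecidableEq ι]
  {g : (ι → ℝ) → (ι → ℝ) → ℝ} {x y : ι → ℝ}

theorem pdy_eq (h : DifferentiableAt ℝ (fun p : (ι→ℝ)×(ι→ℝ) => g p.1 p.2) (x, y)) (α : ι) :
    pdy g α x y = fderiv ℝ (fun p : (ι→ℝ)×(ι→ℝ) => g p.1 p.2) (x, y) (0, Pi.single α 1) := by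
  have hc : HasFDerivAt (g x)
      ((fderiv ℝ (fun p : (ι→ℝ)×(ι→ℝ) => g p.1 p.2) (x, y)).comp
        (ContinuousLinearMap.inr ℝ (ι→ℝ) (ι→ℝ))) y :=
    h.hasFDerivAt.comp y (hasFDerivAt_prodMk_right x y)
  rw [pdy, hc.fderiv]; rfl

theorem pdx_eq (h : DifferentiableAt ℝ (fun p : (ι→ℝ)×(ι→ℝ) => g p.1 p.2) (x, y)) (γ : ι) :
    pdx g γ x y = fderiv ℝ (fun p : (ι→ℝ)×(ι→ℝ) => g p.1 p.2) (x, y) (Pi.single γ 1, 0) := by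
  have hc : HasFDerivAt (fun x' => g x' y)
      ((fderiv ℝ (fun p : (ι→ℝ)×(ι→ℝ) => g p.1 p.2) (x, y)).comp
        (ContinuousLinearMap.inl ℝ (ι→ℝ) (ι→ℝ))) x :=
    (h.hasFDerivAt.comp (f := fun e : ι→ℝ => (e, y)) x (hasFDerivAt_prodMk_left x y) :)
  rw [pdx, hc.fderiv]; rfl

end Bridge

section Smooth
variable {E : Type*} [NormedAddCommGroup E] [NormedSpace ℝ E]

theorem contDiffOn_fderiv_apply {u : E → ℝ} {s : Set E}
    (h : ContDiffOn ℝ (⊤ : ℕ∞) u s) (hs : IsOpen s) (v : E) :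
    ContDiffOn ℝ (⊤ : ℕ∞) (fun p => fderiv ℝ u p v) s := by
  have h1 : ContDiffOn ℝ (⊤ : ℕ∞) (fderiv ℝ u) s := by
    have := h.fderiv_of_isOpen (m := (⊤ : ℕ∞)) hs ?_
    · exact this
    · exact le_of_eq (by norm_cast)
  exact (ContinuousLinearMap.apply ℝ ℝ v).contDiff.comp_contDiffOn h1
end Smooth

section Bridge2
variable {ι : Type*} [Fintype ι] [DecidableEq ι]
  {g : (ι → ℝ) → (ι → ℝ) → ℝ} {s : Set (((ι→ℝ))×((ι→ℝ)))} {x y : ι → ℝ}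

theorem slice_ev (hs : IsOpen s) (hp : (x, y) ∈ s)
    (h : ContDiffOn ℝ (⊤ : ℕ∞) (fun p : (ι→ℝ)×(ι→ℝ) => g p.1 p.2) s) (β : ι) :
    (fun y' => pdy g β x y') =ᶠ[nhds y]
      (fun y' => fderiv ℝ (fun p : (ι→ℝ)×(ι→ℝ) => g p.1 p.2) (x, y') (0, Pi.single β 1)) := by
  have hso : IsOpen {y' | (x, y') ∈ s} := hs.preimage (Continuous.prodMk_right x)
  filter_upwards [hso.mem_nhds hp] with y' hy'
  exact pdy_eq ((h.differentiableOn (by norm_num)).differentiableAt (hs.mem_nhds hy')) β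

theorem pdy_pdy_eq (h : ContDiffOn ℝ (⊤ : ℕ∞) (fun p : (ι→ℝ)×(ι→ℝ) => g p.1 p.2) s)
    (hs : IsOpen s) (hp : (x, y) ∈ s) (α β : ι) :
    pdy (pdy g β) α x y =
      fderiv ℝ (fun p : (ι→ℝ)×(ι→ℝ) =>
        fderiv ℝ (fun q : (ι→ℝ)×(ι→ℝ) => g q.1 q.2) p (0, Pi.single β 1)) (x, y)
        (0, Pi.single α 1) := by
  have h2 := contDiffOn_fderiv_apply h hs (0, Pi.single β 1)
  have hdiff : DifferentiableAt ℝ (fun p : (ι→ℝ)×(ι→ℝ) =>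
      fderiv ℝ (fun q : (ι→ℝ)×(ι→ℝ) => g q.1 q.2) p (0, Pi.single β 1)) (x, y) :=
    (h2.differentiableOn (by norm_num)).differentiableAt (hs.mem_nhds hp)
  show fderiv ℝ (fun y' => pdy g β x y') y (Pi.single α 1) = _
  rw [Filter.EventuallyEq.fderiv_eq (𝕜 := ℝ) (slice_ev hs hp h β)]
  exact pdy_eq (g := fun a b => fderiv ℝ (fun q : (ι→ℝ)×(ι→ℝ) => g q.1 q.2) (a, b)
    (0, Pi.single β 1)) hdiff α

theorem pdx_pdy_eq (h : ContDiffOn ℝ (⊤ : ℕ∞) (fun p : (ι→ℝ)×(ι→ℝ) => g p.1 p.2) s)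
    (hs : IsOpen s) (hp : (x, y) ∈ s) (γ β : ι) :
    pdx (pdy g β) γ x y =
      fderiv ℝ (fun p : (ι→ℝ)×(ι→ℝ) =>
        fderiv ℝ (fun q : (ι→ℝ)×(ι→ℝ) => g q.1 q.2) p (0, Pi.single β 1)) (x, y)
        (Pi.single γ 1, 0) := by
  have h2 := contDiffOn_fderiv_apply h hs (0, Pi.single β 1)
  have hdiff : DifferentiableAt ℝ (fun p : (ι→ℝ)×(ι→ℝ) =>
      fderiv ℝ (fun q : (ι→ℝ)×(ι→ℝ) => g q.1 q.2) p (0, Pi.single β 1)) (x, y) :=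
    (h2.differentiableOn (by norm_num)).differentiableAt (hs.mem_nhds hp)
  have hso : IsOpen {x' | (x', y) ∈ s} := hs.preimage (continuous_id.prodMk continuous_const)
  have hev : (fun x' => pdy g β x' y) =ᶠ[nhds x]
      (fun x' => fderiv ℝ (fun p : (ι→ℝ)×(ι→ℝ) => g p.1 p.2) (x', y) (0, Pi.single β 1)) := by
    filter_upwards [hso.mem_nhds hp] with x' hx'
    exact pdy_eq ((h.differentiableOn (by norm_num)).differentiableAt (hs.mem_nhds hx')) β
  show fderiv ℝ (fun x' => pdy g β x' y) x (Pi.single γ 1) = _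
  rw [Filter.EventuallyEq.fderiv_eq (𝕜 := ℝ) hev]
  exact pdx_eq (g := fun a b => fderiv ℝ (fun q : (ι→ℝ)×(ι→ℝ) => g q.1 q.2) (a, b)
    (0, Pi.single β 1)) hdiff γ

section Euler
variable {ι : Type*} [Fintype ι] [DecidableEq ι]

theorem fderiv_apply_self_eq_sum {u : (ι→ℝ) → ℝ} {y : ι→ℝ} :
    fderiv ℝ u y y = ∑ l, y l * fderiv ℝ u y (Pi.single l 1) := by
  have hy : y = ∑ l, (y l) • (Pi.single l (1:ℝ) : ι → ℝ) := by
    funext j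
    simp [Finset.sum_apply, Pi.single_apply]
  calc fderiv ℝ u y y = fderiv ℝ u y (∑ l, (y l) • (Pi.single l (1:ℝ) : ι → ℝ)) := by
        rw [← hy]
    _ = ∑ l, y l * fderiv ℝ u y (Pi.single l 1) := by
        rw [map_sum]
        exact Finset.sum_congr rfl fun l _ => by
          rw [(fderiv ℝ u y).map_smul]; rfl

theorem euler {u : (ι→ℝ) → ℝ} {y : ι→ℝ} (d : ℕ)
    (hdiff : DifferentiableAt ℝ u y)
    (hom : ∀ᶠ c in nhds (1:ℝ), u (c • y) = c ^ d * u y) :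
    ∑ l, y l * fderiv ℝ u y (Pi.single l 1) = d * u y := by
  have h1 : HasDerivAt (fun c : ℝ => c • y) y 1 := by
    simpa using (hasDerivAt_id (1:ℝ)).smul_const y
  have h2 : HasDerivAt (fun c : ℝ => u (c • y)) (fderiv ℝ u y y) 1 := by
    have hd : HasFDerivAt u (fderiv ℝ u y) ((1:ℝ) • y) := by
      rw [one_smul]; exact hdiff.hasFDerivAt
    have := hd.comp_hasDerivAt 1 h1
    exact this
  have h3 : HasDerivAt (fun c : ℝ => c ^ d * u y) ((d : ℝ) * u y) 1 := by
    simpa using (hasDerivAt_pow d (1:ℝ)).mul_const (u y)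
  have h4 : HasDerivAt (fun c : ℝ => u (c • y)) ((d : ℝ) * u y) 1 :=
    h3.congr_of_eventuallyEq hom
  rw [← fderiv_apply_self_eq_sum]
  exact h2.unique h4
end Euler

section CompLemmas
variable {E E' : Type*} [NormedAddCommGroup E] [NormedSpace ℝ E]
  [NormedAddCommGroup E'] [NormedSpace ℝ E']

theorem fderiv_clm_comp' {u : E' → ℝ} {L : E →L[ℝ] E'} {p : E} (h : DifferentiableAt ℝ u (L p))
    (v : E) : fderiv ℝ (fun q => u (L q)) p v = fderiv ℝ u (L p) (L v) := by
  have h2 : HasFDerivAt (fun q => u (L q)) ((fderiv ℝ u (L p)).comp L) p :=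
    h.hasFDerivAt.comp p L.hasFDerivAt
  rw [h2.fderiv]; rfl

theorem fderiv_mk_right {F' : Type*} [NormedAddCommGroup F'] [NormedSpace ℝ F']
    {w : E × F' → ℝ} {x : E} {y : F'} (h : DifferentiableAt ℝ w (x, y)) (v : F') :
    fderiv ℝ (fun y' => w (x, y')) y v = fderiv ℝ w (x, y) (0, v) := by
  have h2 : HasFDerivAt (fun y' => w (x, y'))
      ((fderiv ℝ w (x, y)).comp (ContinuousLinearMap.inr ℝ E F')) y :=
    h.hasFDerivAt.comp y (hasFDerivAt_prodMk_right x y)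
  rw [h2.fderiv]; rfl

theorem fderiv_mk_left {F' : Type*} [NormedAddCommGroup F'] [NormedSpace ℝ F']
    {w : E × F' → ℝ} {x : E} {y : F'} (h : DifferentiableAt ℝ w (x, y)) (v : E) :
    fderiv ℝ (fun x' => w (x', y)) x v = fderiv ℝ w (x, y) (v, 0) := by
  have h2 : HasFDerivAt (fun x' => w (x', y))
      ((fderiv ℝ w (x, y)).comp (ContinuousLinearMap.inl ℝ E F')) x :=
    h.hasFDerivAt.comp x (hasFDerivAt_prodMk_left x y)
  rw [h2.fderiv]; rfl

end CompLemmas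


section FinslerEuler
variable {κ : Type*} [Fintype κ] [DecidableEq κ]
  {U : Set (κ→ℝ)} {FF : (κ→ℝ)→(κ→ℝ)→ℝ}

theorem finsler_isOpen_dom (hF : IsFinslerMetric U FF) :
    IsOpen (U ×ˢ {y : κ→ℝ | y ≠ 0}) := hF.isOpen.prod isOpen_ne

theorem finsler_diffAt (hF : IsFinslerMetric U FF) {x y : κ→ℝ} (hx : x ∈ U) (hy : y ≠ 0) :
    DifferentiableAt ℝ (fun p : (κ→ℝ)×(κ→ℝ) => FF p.1 p.2 ^ 2) (x, y) :=
  (hF.smooth.differentiableOn (by norm_num)).differentiableAt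
    ((finsler_isOpen_dom hF).mem_nhds ⟨hx, hy⟩)

theorem finsler_euler2 (hF : IsFinslerMetric U FF) {x y : κ→ℝ} (hx : x ∈ U) (hy : y ≠ 0) :
    ∑ l, y l * pdy (fun a b => FF a b ^ 2) l x y = 2 * FF x y ^ 2 := by
  have hdiff : DifferentiableAt ℝ (fun y' => FF x y' ^ 2) y :=
    (finsler_diffAt hF hx hy).comp y ((differentiableAt_const x).prodMk differentiableAt_id)
  have hom : ∀ᶠ c in nhds (1:ℝ), FF x (c • y) ^ 2 = c ^ 2 * FF x y ^ 2 :=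
    Filter.Eventually.of_forall fun c => by
      rw [hF.homog x hx y c, mul_pow, sq_abs]
  have := euler (u := fun y' => FF x y' ^ 2) 2 hdiff hom
  simpa [pdy] using this

theorem finsler_pdy_homog (hF : IsFinslerMetric U FF) {x y : κ→ℝ} {c : ℝ}
    (hx : x ∈ U) (hy : y ≠ 0) (hc : c ≠ 0) (j : κ) :
    pdy (fun a b => FF a b ^ 2) j x (c • y) = c * pdy (fun a b => FF a b ^ 2) j x y := by
  set u2 : (κ→ℝ) → ℝ := fun y' => FF x y' ^ 2 with hu2
  have hcy : c • y ≠ 0 := smul_ne_zero hc hy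
  have hd1 : DifferentiableAt ℝ u2 (c • y) :=
    (finsler_diffAt hF hx hcy).comp (c • y) ((differentiableAt_const x).prodMk differentiableAt_id)
  have hd0 : DifferentiableAt ℝ u2 y :=
    (finsler_diffAt hF hx hy).comp y ((differentiableAt_const x).prodMk differentiableAt_id)
  have hfun : (fun y' => u2 (c • y')) = fun y' => c ^ 2 * u2 y' := by
    funext y'
    simp only [hu2, hF.homog x hx y' c, mul_pow, sq_abs]
  have hL : ∀ v, fderiv ℝ (fun y' => u2 (c • y')) y v = fderiv ℝ u2 (c • y) (c • v) := by
    intro v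
    have : (fun y' => u2 (c • y')) = fun y' => u2 ((c • ContinuousLinearMap.id ℝ (κ→ℝ)) y') := rfl
    rw [this, fderiv_clm_comp' (by simpa using hd1)]
    simp
  have hR : fderiv ℝ (fun y' => c ^ 2 * u2 y') y = c ^ 2 • fderiv ℝ u2 y :=
    fderiv_const_mul hd0 (c ^ 2)
  have key := hL (Pi.single j 1)
  rw [hfun, hR] at key
  have : c * fderiv ℝ u2 (c • y) (Pi.single j 1) = c * (c * fderiv ℝ u2 y (Pi.single j 1)) := by
    have h5 := key
    rw [(fderiv ℝ u2 (c • y)).map_smul] at h5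
    simp only [ContinuousLinearMap.smul_apply, smul_eq_mul] at h5
    rw [← h5]; ring
  exact mul_left_cancel₀ hc this

theorem finsler_euler1 (hF : IsFinslerMetric U FF) {x y : κ→ℝ} (hx : x ∈ U) (hy : y ≠ 0)
    (j : κ) :
    ∑ l, y l * fundTensor FF x y l j = pdy (fun a b => FF a b ^ 2) j x y := by
  set u : (κ→ℝ)×(κ→ℝ) → ℝ := fun p => FF p.1 p.2 ^ 2 with hu
  have hs := finsler_isOpen_dom hF
  have hp : (x, y) ∈ U ×ˢ {y : κ→ℝ | y ≠ 0} := ⟨hx, hy⟩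
  have hev := slice_ev (g := fun a b => FF a b ^ 2) hs hp hF.smooth j
  have hD1 := contDiffOn_fderiv_apply (u := u) hF.smooth hs (0, Pi.single j 1)
  have hD1diff : DifferentiableAt ℝ
      (fun p : (κ→ℝ)×(κ→ℝ) => fderiv ℝ u p (0, Pi.single j 1)) (x, y) :=
    (hD1.differentiableOn (by norm_num)).differentiableAt (hs.mem_nhds hp)
  have hrhsdiff : DifferentiableAt ℝ
      (fun y' => fderiv ℝ u (x, y') (0, Pi.single j 1)) y :=
    hD1diff.comp y ((differentiableAt_const x).prodMk differentiableAt_id)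
  have hdiff : DifferentiableAt ℝ (fun y' => pdy (fun a b => FF a b ^ 2) j x y') y :=
    (Filter.EventuallyEq.differentiableAt_iff hev).mpr hrhsdiff
  have hom : ∀ᶠ c in nhds (1:ℝ), pdy (fun a b => FF a b ^ 2) j x (c • y)
      = c ^ 1 * pdy (fun a b => FF a b ^ 2) j x y := by
    filter_upwards [eventually_ne_nhds one_ne_zero] with c hc
    rw [finsler_pdy_homog hF hx hy hc j, pow_one]
  have heuler := euler (u := fun y' => pdy (fun a b => FF a b ^ 2) j x y') 1 hdiff hom
  have hterm : ∀ l, fderiv ℝ (fun y' => pdy (fun a b => FF a b ^ 2) j x y') y (Pi.single l 1)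
      = fundTensor FF x y l j := by
    intro l
    rw [Filter.EventuallyEq.fderiv_eq (𝕜 := ℝ) hev, fderiv_mk_right hD1diff,
      fundTensor, pdy_pdy_eq hF.smooth hs hp]
  calc ∑ l, y l * fundTensor FF x y l j
      = ∑ l, y l * fderiv ℝ (fun y' => pdy (fun a b => FF a b ^ 2) j x y') y (Pi.single l 1) :=
        Finset.sum_congr rfl fun l _ => by rw [hterm l]
    _ = pdy (fun a b => FF a b ^ 2) j x y := by rw [heuler]; norm_num

end FinslerEuler

section FinslerEuler3
variable {κ : Type*} [Fintype κ] [DecidableEq κ]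
  {U : Set (κ→ℝ)} {FF : (κ→ℝ)→(κ→ℝ)→ℝ}

theorem finsler_euler3 (hF : IsFinslerMetric U FF) {x y : κ→ℝ} (hx : x ∈ U) (hy : y ≠ 0)
    (γ : κ) :
    ∑ l, y l * pdx (pdy (fun a b => FF a b ^ 2) l) γ x y
      = 2 * pdx (fun a b => FF a b ^ 2) γ x y := by
  set u : (κ→ℝ)×(κ→ℝ) → ℝ := fun p => FF p.1 p.2 ^ 2 with hu
  have hs := finsler_isOpen_dom hF
  have hp : (x, y) ∈ U ×ˢ {y : κ→ℝ | y ≠ 0} := ⟨hx, hy⟩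
  have hso : IsOpen {x' | (x', y) ∈ U ×ˢ {y : κ→ℝ | y ≠ 0}} :=
    hs.preimage (continuous_id.prodMk continuous_const)
  -- smooth representatives
  have hD1 : ∀ l : κ, DifferentiableAt ℝ
      (fun p : (κ→ℝ)×(κ→ℝ) => fderiv ℝ u p (0, Pi.single l 1)) (x, y) := fun l =>
    ((contDiffOn_fderiv_apply (u := u) hF.smooth hs (0, Pi.single l 1)).differentiableOn
      (by norm_num)).differentiableAt (hs.mem_nhds hp)
  have hterm_diff : ∀ l : κ, DifferentiableAt ℝ
      (fun x' => fderiv ℝ u (x', y) (0, Pi.single l 1)) x := fun l =>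
    ((hD1 l).comp (f := fun e : κ→ℝ => (e, y)) x (differentiableAt_id.prodMk (differentiableAt_const y)) :)
  -- the eventually-equal zero identity
  have hev : (fun x' => ∑ l, y l * fderiv ℝ u (x', y) (0, Pi.single l 1)) =ᶠ[nhds x]
      (fun x' => 2 * u (x', y)) := by
    filter_upwards [hso.mem_nhds hp] with x' hx'
    have he2 := finsler_euler2 hF hx'.1 hx'.2
    have hpd : ∀ l, pdy (fun a b => FF a b ^ 2) l x' y = fderiv ℝ u (x', y) (0, Pi.single l 1) :=
      fun l => pdy_eq (finsler_diffAt hF hx'.1 hx'.2) l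
    calc ∑ l, y l * fderiv ℝ u (x', y) (0, Pi.single l 1)
        = ∑ l, y l * pdy (fun a b => FF a b ^ 2) l x' y :=
          Finset.sum_congr rfl fun l _ => by rw [hpd l]
      _ = 2 * u (x', y) := he2
  have hfder := Filter.EventuallyEq.fderiv_eq (𝕜 := ℝ) hev
  -- compute LHS derivative
  have hLdiff : ∀ l ∈ Finset.univ, DifferentiableAt ℝ
      (fun x' => y l * fderiv ℝ u (x', y) (0, Pi.single l 1)) x := fun l _ =>
    (hterm_diff l).const_mul (y l)
  have hL : fderiv ℝ (fun x' => ∑ l, y l * fderiv ℝ u (x', y) (0, Pi.single l 1)) x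
      (Pi.single γ 1)
      = ∑ l, y l * fderiv ℝ (fun p : (κ→ℝ)×(κ→ℝ) => fderiv ℝ u p (0, Pi.single l 1)) (x, y)
          (Pi.single γ 1, 0) := by
    rw [fderiv_fun_sum hLdiff]
    rw [ContinuousLinearMap.sum_apply]
    refine Finset.sum_congr rfl fun l _ => ?_
    rw [fderiv_const_mul (hterm_diff l) (y l)]
    simp only [ContinuousLinearMap.smul_apply, smul_eq_mul]
    rw [fderiv_mk_left (hD1 l)]
  -- compute RHS derivative
  have hudiff : DifferentiableAt ℝ (fun x' => u (x', y)) x :=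
    (finsler_diffAt hF hx hy).comp (f := fun e : κ→ℝ => (e, y)) x (differentiableAt_id.prodMk (differentiableAt_const y))
  have hR : fderiv ℝ (fun x' => 2 * u (x', y)) x (Pi.single γ 1)
      = 2 * fderiv ℝ u (x, y) (Pi.single γ 1, 0) := by
    rw [fderiv_const_mul hudiff 2]
    simp only [ContinuousLinearMap.smul_apply, smul_eq_mul]
    rw [fderiv_mk_left (finsler_diffAt hF hx hy)]
  -- assemble
  have key : ∑ l, y l * fderiv ℝ (fun p : (κ→ℝ)×(κ→ℝ) => fderiv ℝ u p (0, Pi.single l 1)) (x, y)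
        (Pi.single γ 1, 0) = 2 * fderiv ℝ u (x, y) (Pi.single γ 1, 0) := by
    rw [← hL, hfder, hR]
  calc ∑ l, y l * pdx (pdy (fun a b => FF a b ^ 2) l) γ x y
      = ∑ l, y l * fderiv ℝ (fun p : (κ→ℝ)×(κ→ℝ) => fderiv ℝ u p (0, Pi.single l 1)) (x, y)
          (Pi.single γ 1, 0) :=
        Finset.sum_congr rfl fun l _ => by rw [pdx_pdy_eq hF.smooth hs hp]
    _ = 2 * fderiv ℝ u (x, y) (Pi.single γ 1, 0) := key
    _ = 2 * pdx (fun a b => FF a b ^ 2) γ x y := by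
        rw [pdx_eq (finsler_diffAt hF hx hy)]

end FinslerEuler3

section Symm
variable {E' : Type*} [NormedAddCommGroup E'] [NormedSpace ℝ E']

theorem fderiv_fderiv_apply {φ : E' → ℝ} {T : Set E'} (hT : IsOpen T)
    (h : ContDiffOn ℝ (⊤ : ℕ∞) φ T) {z : E'} (hz : z ∈ T) (v w : E') :
    fderiv ℝ (fun q => fderiv ℝ φ q v) z w = fderiv ℝ (fderiv ℝ φ) z w v := by
  have hx : DifferentiableAt ℝ (fderiv ℝ φ) z :=
    (((h.fderiv_of_isOpen (m := (⊤ : ℕ∞)) hT (le_of_eq (by norm_cast))).differentiableOn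
      (by norm_num))).differentiableAt (hT.mem_nhds hz)
  have h2 : HasFDerivAt (fun q => (ContinuousLinearMap.apply ℝ ℝ v) (fderiv ℝ φ q))
      ((ContinuousLinearMap.apply ℝ ℝ v).comp (fderiv ℝ (fderiv ℝ φ) z)) z :=
    ((ContinuousLinearMap.apply ℝ ℝ v).hasFDerivAt).comp z hx.hasFDerivAt
  have : fderiv ℝ (fun q => fderiv ℝ φ q v) z =
      ((ContinuousLinearMap.apply ℝ ℝ v).comp (fderiv ℝ (fderiv ℝ φ) z)) := h2.fderiv
  rw [this]; rfl

theorem fderiv_symm {φ : E' → ℝ} {T : Set E'} (hT : IsOpen T)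
    (h : ContDiffOn ℝ (⊤ : ℕ∞) φ T) {z : E'} (hz : z ∈ T) (v w : E') :
    fderiv ℝ (fun q => fderiv ℝ φ q v) z w = fderiv ℝ (fun q => fderiv ℝ φ q w) z v := by
  have hf : ∀ᶠ q in nhds z, HasFDerivAt φ (fderiv ℝ φ q) q := by
    filter_upwards [hT.mem_nhds hz] with q hq
    exact ((h.differentiableOn (by norm_num)).differentiableAt (hT.mem_nhds hq)).hasFDerivAt
  have hx : DifferentiableAt ℝ (fderiv ℝ φ) z :=
    (((h.fderiv_of_isOpen (m := (⊤ : ℕ∞)) hT (le_of_eq (by norm_cast))).differentiableOn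
      (by norm_num))).differentiableAt (hT.mem_nhds hz)
  rw [fderiv_fderiv_apply hT h hz v w, fderiv_fderiv_apply hT h hz w v]
  exact second_derivative_symmetric_of_eventually hf hx.hasFDerivAt w v
end Symm

noncomputable def dS (f : ℝ → ℝ → ℝ) (s t : ℝ) : ℝ :=
  fderiv ℝ (fun q : ℝ×ℝ => f q.1 q.2) (s, t) (1, 0)
noncomputable def dT (f : ℝ → ℝ → ℝ) (s t : ℝ) : ℝ :=
  fderiv ℝ (fun q : ℝ×ℝ => f q.1 q.2) (s, t) (0, 1)
noncomputable def dSS (f : ℝ → ℝ → ℝ) (s t : ℝ) : ℝ :=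
  fderiv ℝ (fun q : ℝ×ℝ => dS f q.1 q.2) (s, t) (1, 0)
noncomputable def dST (f : ℝ → ℝ → ℝ) (s t : ℝ) : ℝ :=
  fderiv ℝ (fun q : ℝ×ℝ => dS f q.1 q.2) (s, t) (0, 1)
noncomputable def dTS (f : ℝ → ℝ → ℝ) (s t : ℝ) : ℝ :=
  fderiv ℝ (fun q : ℝ×ℝ => dT f q.1 q.2) (s, t) (1, 0)
noncomputable def dTT (f : ℝ → ℝ → ℝ) (s t : ℝ) : ℝ :=
  fderiv ℝ (fun q : ℝ×ℝ => dT f q.1 q.2) (s, t) (0, 1)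

theorem clm_pair (T : (ℝ×ℝ) →L[ℝ] ℝ) (a b : ℝ) :
    T (a, b) = a * T (1, 0) + b * T (0, 1) := by
  have h : (a, b) = a • ((1:ℝ), (0:ℝ)) + b • ((0:ℝ), (1:ℝ)) := by
    simp [Prod.ext_iff]
  rw [h, map_add, T.map_smul, T.map_smul]; rfl

noncomputable def resL (m n : ℕ) : ((Fin m ⊕ Fin n) → ℝ) →L[ℝ] (Fin m → ℝ) :=
  ContinuousLinearMap.pi (fun i => ContinuousLinearMap.proj (Sum.inl i))
noncomputable def resR (m n : ℕ) : ((Fin m ⊕ Fin n) → ℝ) →L[ℝ] (Fin n → ℝ) :=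
  ContinuousLinearMap.pi (fun i => ContinuousLinearMap.proj (Sum.inr i))

theorem resL_apply {m n : ℕ} (y : (Fin m ⊕ Fin n) → ℝ) : resL m n y = y ∘ Sum.inl := rfl
theorem resR_apply {m n : ℕ} (y : (Fin m ⊕ Fin n) → ℝ) : resR m n y = y ∘ Sum.inr := rfl

noncomputable def lamL (m n : ℕ) :
    (((Fin m ⊕ Fin n) → ℝ) × ((Fin m ⊕ Fin n) → ℝ)) →L[ℝ] ((Fin m → ℝ) × (Fin m → ℝ)) :=
  (resL m n).prodMap (resL m n)
noncomputable def lamR (m n : ℕ) :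
    (((Fin m ⊕ Fin n) → ℝ) × ((Fin m ⊕ Fin n) → ℝ)) →L[ℝ] ((Fin n → ℝ) × (Fin n → ℝ)) :=
  (resR m n).prodMap (resR m n)

theorem lamL_apply {m n : ℕ} (p : ((Fin m ⊕ Fin n) → ℝ) × ((Fin m ⊕ Fin n) → ℝ)) :
    lamL m n p = (p.1 ∘ Sum.inl, p.2 ∘ Sum.inl) := rfl
theorem lamR_apply {m n : ℕ} (p : ((Fin m ⊕ Fin n) → ℝ) × ((Fin m ⊕ Fin n) → ℝ)) :
    lamR m n p = (p.1 ∘ Sum.inr, p.2 ∘ Sum.inr) := rfl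

section Mink
variable {m n : ℕ}
  {U₁ : Set (Fin m → ℝ)} {U₂ : Set (Fin n → ℝ)}
  {F₁ : (Fin m → ℝ) → (Fin m → ℝ) → ℝ} {F₂ : (Fin n → ℝ) → (Fin n → ℝ) → ℝ}
  {f : ℝ → ℝ → ℝ}
  {F : (Fin m ⊕ Fin n → ℝ) → (Fin m ⊕ Fin n → ℝ) → ℝ}

theorem mink_G_eq (hprod : IsMinkowskianProduct U₁ U₂ F₁ F₂ f F) :
    (fun p : (Fin m ⊕ Fin n → ℝ) × (Fin m ⊕ Fin n → ℝ) => F p.1 p.2 ^ 2) =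
      fun p => f (F₁ (p.1 ∘ Sum.inl) (p.2 ∘ Sum.inl) ^ 2)
        (F₂ (p.1 ∘ Sum.inr) (p.2 ∘ Sum.inr) ^ 2) := by
  funext p
  rw [hprod.F_def]
  exact Real.sq_sqrt (hprod.f_nonneg _ (Set.mem_Ici.mpr (sq_nonneg _)) _ (Set.mem_Ici.mpr (sq_nonneg _)))

theorem mink_d1 (hprod : IsMinkowskianProduct U₁ U₂ F₁ F₂ f F)
    {x y : Fin m ⊕ Fin n → ℝ} (hx1 : x ∘ Sum.inl ∈ U₁) (hx2 : x ∘ Sum.inr ∈ U₂)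
    (hy1 : y ∘ Sum.inl ≠ 0) (hy2 : y ∘ Sum.inr ≠ 0)
    (v : ((Fin m ⊕ Fin n) → ℝ) × ((Fin m ⊕ Fin n) → ℝ)) :
    fderiv ℝ (fun p : (Fin m ⊕ Fin n → ℝ) × (Fin m ⊕ Fin n → ℝ) => F p.1 p.2 ^ 2) (x, y) v =
      fderiv ℝ (fun p : (Fin m → ℝ) × (Fin m → ℝ) => F₁ p.1 p.2 ^ 2)
          (x ∘ Sum.inl, y ∘ Sum.inl) (v.1 ∘ Sum.inl, v.2 ∘ Sum.inl)
        * dS f (F₁ (x ∘ Sum.inl) (y ∘ Sum.inl) ^ 2) (F₂ (x ∘ Sum.inr) (y ∘ Sum.inr) ^ 2)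
      + fderiv ℝ (fun p : (Fin n → ℝ) × (Fin n → ℝ) => F₂ p.1 p.2 ^ 2)
          (x ∘ Sum.inr, y ∘ Sum.inr) (v.1 ∘ Sum.inr, v.2 ∘ Sum.inr)
        * dT f (F₁ (x ∘ Sum.inl) (y ∘ Sum.inl) ^ 2) (F₂ (x ∘ Sum.inr) (y ∘ Sum.inr) ^ 2) := by
  classical
  set φ : ℝ × ℝ → ℝ := fun q => f q.1 q.2 with hφ
  set sK : ℝ := F₁ (x ∘ Sum.inl) (y ∘ Sum.inl) ^ 2
  set sH : ℝ := F₂ (x ∘ Sum.inr) (y ∘ Sum.inr) ^ 2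
  have hzT : ((sK, sH) : ℝ × ℝ) ∈ Set.Ioi (0:ℝ) ×ˢ Set.Ioi (0:ℝ) :=
    ⟨pow_pos (hprod.finsler₁.pos _ hx1 _ hy1) 2, pow_pos (hprod.finsler₂.pos _ hx2 _ hy2) 2⟩
  have hφd : DifferentiableAt ℝ φ (sK, sH) :=
    (hprod.f_smooth.differentiableOn (by norm_num)).differentiableAt
      ((isOpen_Ioi.prod isOpen_Ioi).mem_nhds hzT)
  have hK : DifferentiableAt ℝ (fun p : (Fin m → ℝ) × (Fin m → ℝ) => F₁ p.1 p.2 ^ 2)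
      (lamL m n (x, y)) := finsler_diffAt hprod.finsler₁ hx1 hy1
  have hH : DifferentiableAt ℝ (fun p : (Fin n → ℝ) × (Fin n → ℝ) => F₂ p.1 p.2 ^ 2)
      (lamR m n (x, y)) := finsler_diffAt hprod.finsler₂ hx2 hy2
  have hA : HasFDerivAt (fun p => F₁ (p.1 ∘ Sum.inl) (p.2 ∘ Sum.inl) ^ 2)
      ((fderiv ℝ (fun p : (Fin m → ℝ) × (Fin m → ℝ) => F₁ p.1 p.2 ^ 2)
        (lamL m n (x, y))).comp (lamL m n)) (x, y) :=
    hK.hasFDerivAt.comp (x, y) (lamL m n).hasFDerivAt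
  have hB : HasFDerivAt (fun p => F₂ (p.1 ∘ Sum.inr) (p.2 ∘ Sum.inr) ^ 2)
      ((fderiv ℝ (fun p : (Fin n → ℝ) × (Fin n → ℝ) => F₂ p.1 p.2 ^ 2)
        (lamR m n (x, y))).comp (lamR m n)) (x, y) :=
    hH.hasFDerivAt.comp (x, y) (lamR m n).hasFDerivAt
  have hΨ := hA.prodMk hB
  have hG : HasFDerivAt (fun p : (Fin m ⊕ Fin n → ℝ) × (Fin m ⊕ Fin n → ℝ) => F p.1 p.2 ^ 2)
      ((fderiv ℝ φ (sK, sH)).comp (((fderiv ℝ (fun p : (Fin m → ℝ) × (Fin m → ℝ) =>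
          F₁ p.1 p.2 ^ 2) (lamL m n (x, y))).comp (lamL m n)).prod
        ((fderiv ℝ (fun p : (Fin n → ℝ) × (Fin n → ℝ) =>
          F₂ p.1 p.2 ^ 2) (lamR m n (x, y))).comp (lamR m n)))) (x, y) := by
    rw [mink_G_eq hprod]
    exact hφd.hasFDerivAt.comp (x, y) hΨ
  rw [hG.fderiv]
  simp only [ContinuousLinearMap.coe_comp', Function.comp_apply,
    ContinuousLinearMap.prod_apply]
  rw [clm_pair (fderiv ℝ φ (sK, sH)) _ _]
  rfl

end Mink

section Mink2
variable {m n : ℕ}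
  {U₁ : Set (Fin m → ℝ)} {U₂ : Set (Fin n → ℝ)}
  {F₁ : (Fin m → ℝ) → (Fin m → ℝ) → ℝ} {F₂ : (Fin n → ℝ) → (Fin n → ℝ) → ℝ}
  {f : ℝ → ℝ → ℝ}
  {F : (Fin m ⊕ Fin n → ℝ) → (Fin m ⊕ Fin n → ℝ) → ℝ}

theorem mink_dST_symm (hprod : IsMinkowskianProduct U₁ U₂ F₁ F₂ f F)
    {s t : ℝ} (hs : 0 < s) (ht : 0 < t) : dTS f s t = dST f s t := by
  have := fderiv_symm (isOpen_Ioi.prod isOpen_Ioi) hprod.f_smooth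
    (z := ((s, t) : ℝ × ℝ)) ⟨hs, ht⟩ ((1:ℝ), (0:ℝ)) ((0:ℝ), (1:ℝ))
  exact this.symm

theorem mink_d2 (hprod : IsMinkowskianProduct U₁ U₂ F₁ F₂ f F)
    {x y : Fin m ⊕ Fin n → ℝ} (hx1 : x ∘ Sum.inl ∈ U₁) (hx2 : x ∘ Sum.inr ∈ U₂)
    (hy1 : y ∘ Sum.inl ≠ 0) (hy2 : y ∘ Sum.inr ≠ 0)
    (v w : ((Fin m ⊕ Fin n) → ℝ) × ((Fin m ⊕ Fin n) → ℝ)) :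
    fderiv ℝ (fun p : (Fin m ⊕ Fin n → ℝ) × (Fin m ⊕ Fin n → ℝ) =>
        fderiv ℝ (fun q : (Fin m ⊕ Fin n → ℝ) × (Fin m ⊕ Fin n → ℝ) => F q.1 q.2 ^ 2) p v)
      (x, y) w =
      fderiv ℝ (fun p₁ : (Fin m → ℝ) × (Fin m → ℝ) =>
          fderiv ℝ (fun q₁ : (Fin m → ℝ) × (Fin m → ℝ) => F₁ q₁.1 q₁.2 ^ 2) p₁
            (v.1 ∘ Sum.inl, v.2 ∘ Sum.inl)) (x ∘ Sum.inl, y ∘ Sum.inl)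
          (w.1 ∘ Sum.inl, w.2 ∘ Sum.inl)
        * dS f (F₁ (x ∘ Sum.inl) (y ∘ Sum.inl) ^ 2) (F₂ (x ∘ Sum.inr) (y ∘ Sum.inr) ^ 2)
      + fderiv ℝ (fun p₂ : (Fin n → ℝ) × (Fin n → ℝ) =>
          fderiv ℝ (fun q₂ : (Fin n → ℝ) × (Fin n → ℝ) => F₂ q₂.1 q₂.2 ^ 2) p₂
            (v.1 ∘ Sum.inr, v.2 ∘ Sum.inr)) (x ∘ Sum.inr, y ∘ Sum.inr)
          (w.1 ∘ Sum.inr, w.2 ∘ Sum.inr)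
        * dT f (F₁ (x ∘ Sum.inl) (y ∘ Sum.inl) ^ 2) (F₂ (x ∘ Sum.inr) (y ∘ Sum.inr) ^ 2)
      + fderiv ℝ (fun q₁ : (Fin m → ℝ) × (Fin m → ℝ) => F₁ q₁.1 q₁.2 ^ 2)
          (x ∘ Sum.inl, y ∘ Sum.inl) (v.1 ∘ Sum.inl, v.2 ∘ Sum.inl)
        * (fderiv ℝ (fun q₁ : (Fin m → ℝ) × (Fin m → ℝ) => F₁ q₁.1 q₁.2 ^ 2)
              (x ∘ Sum.inl, y ∘ Sum.inl) (w.1 ∘ Sum.inl, w.2 ∘ Sum.inl)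
            * dSS f (F₁ (x ∘ Sum.inl) (y ∘ Sum.inl) ^ 2) (F₂ (x ∘ Sum.inr) (y ∘ Sum.inr) ^ 2)
          + fderiv ℝ (fun q₂ : (Fin n → ℝ) × (Fin n → ℝ) => F₂ q₂.1 q₂.2 ^ 2)
              (x ∘ Sum.inr, y ∘ Sum.inr) (w.1 ∘ Sum.inr, w.2 ∘ Sum.inr)
            * dST f (F₁ (x ∘ Sum.inl) (y ∘ Sum.inl) ^ 2) (F₂ (x ∘ Sum.inr) (y ∘ Sum.inr) ^ 2))
      + fderiv ℝ (fun q₂ : (Fin n → ℝ) × (Fin n → ℝ) => F₂ q₂.1 q₂.2 ^ 2)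
          (x ∘ Sum.inr, y ∘ Sum.inr) (v.1 ∘ Sum.inr, v.2 ∘ Sum.inr)
        * (fderiv ℝ (fun q₁ : (Fin m → ℝ) × (Fin m → ℝ) => F₁ q₁.1 q₁.2 ^ 2)
              (x ∘ Sum.inl, y ∘ Sum.inl) (w.1 ∘ Sum.inl, w.2 ∘ Sum.inl)
            * dST f (F₁ (x ∘ Sum.inl) (y ∘ Sum.inl) ^ 2) (F₂ (x ∘ Sum.inr) (y ∘ Sum.inr) ^ 2)
          + fderiv ℝ (fun q₂ : (Fin n → ℝ) × (Fin n → ℝ) => F₂ q₂.1 q₂.2 ^ 2)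
              (x ∘ Sum.inr, y ∘ Sum.inr) (w.1 ∘ Sum.inr, w.2 ∘ Sum.inr)
            * dTT f (F₁ (x ∘ Sum.inl) (y ∘ Sum.inl) ^ 2) (F₂ (x ∘ Sum.inr) (y ∘ Sum.inr) ^ 2)) := by
  classical
  set φ : ℝ × ℝ → ℝ := fun q => f q.1 q.2 with hφ
  set KK : (Fin m → ℝ) × (Fin m → ℝ) → ℝ := fun p => F₁ p.1 p.2 ^ 2 with hKK
  set HH : (Fin n → ℝ) × (Fin n → ℝ) → ℝ := fun p => F₂ p.1 p.2 ^ 2 with hHH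
  have hs₁ : IsOpen (U₁ ×ˢ {y : Fin m → ℝ | y ≠ 0}) := finsler_isOpen_dom hprod.finsler₁
  have hs₂ : IsOpen (U₂ ×ˢ {y : Fin n → ℝ | y ≠ 0}) := finsler_isOpen_dom hprod.finsler₂
  have hT : IsOpen (Set.Ioi (0:ℝ) ×ˢ Set.Ioi (0:ℝ)) := isOpen_Ioi.prod isOpen_Ioi
  set Ω : Set (((Fin m ⊕ Fin n) → ℝ) × ((Fin m ⊕ Fin n) → ℝ)) :=
    (lamL m n) ⁻¹' (U₁ ×ˢ {y : Fin m → ℝ | y ≠ 0}) ∩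
    (lamR m n) ⁻¹' (U₂ ×ˢ {y : Fin n → ℝ | y ≠ 0}) with hΩ
  have hΩo : IsOpen Ω :=
    ((hs₁.preimage (lamL m n).continuous)).inter (hs₂.preimage (lamR m n).continuous)
  have hpΩ : (x, y) ∈ Ω := ⟨⟨hx1, hy1⟩, ⟨hx2, hy2⟩⟩
  -- eventual representation of the first derivative
  have hev : (fun p : (Fin m ⊕ Fin n → ℝ) × (Fin m ⊕ Fin n → ℝ) =>
      fderiv ℝ (fun q : (Fin m ⊕ Fin n → ℝ) × (Fin m ⊕ Fin n → ℝ) => F q.1 q.2 ^ 2) p v)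
      =ᶠ[nhds (x, y)] (fun p =>
        fderiv ℝ KK (lamL m n p) (lamL m n v) * dS f (KK (lamL m n p)) (HH (lamR m n p))
        + fderiv ℝ HH (lamR m n p) (lamR m n v)
          * dT f (KK (lamL m n p)) (HH (lamR m n p))) := by
    filter_upwards [hΩo.mem_nhds hpΩ] with q hq
    have h := mink_d1 hprod (x := q.1) (y := q.2) hq.1.1 hq.2.1 hq.1.2 hq.2.2 v
    exact h
  rw [Filter.EventuallyEq.fderiv_eq (𝕜 := ℝ) hev]
  -- now differentiate the representative
  set pt₁ := lamL m n (x, y) with hpt₁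
  set pt₂ := lamR m n (x, y) with hpt₂
  set z : ℝ × ℝ := (KK pt₁, HH pt₂) with hz
  have hzT : z ∈ Set.Ioi (0:ℝ) ×ˢ Set.Ioi (0:ℝ) :=
    ⟨pow_pos (hprod.finsler₁.pos _ hx1 _ hy1) 2, pow_pos (hprod.finsler₂.pos _ hx2 _ hy2) 2⟩
  have hKd : DifferentiableAt ℝ KK pt₁ := finsler_diffAt hprod.finsler₁ hx1 hy1
  have hHd : DifferentiableAt ℝ HH pt₂ := finsler_diffAt hprod.finsler₂ hx2 hy2
  have hAc : HasFDerivAt (fun p => KK (lamL m n p)) ((fderiv ℝ KK pt₁).comp (lamL m n)) (x, y) :=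
    (hKd.hasFDerivAt.comp (x, y) (lamL m n).hasFDerivAt :)
  have hBc : HasFDerivAt (fun p => HH (lamR m n p)) ((fderiv ℝ HH pt₂).comp (lamR m n)) (x, y) :=
    (hHd.hasFDerivAt.comp (x, y) (lamR m n).hasFDerivAt :)
  have hΨ : HasFDerivAt (fun p => ((KK (lamL m n p), HH (lamR m n p)) : ℝ × ℝ))
      (((fderiv ℝ KK pt₁).comp (lamL m n)).prod ((fderiv ℝ HH pt₂).comp (lamR m n))) (x, y) :=
    hAc.prodMk hBc
  -- factor 1 : p ↦ fderiv KK (lamL p) (lamL v)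
  have δ1 : DifferentiableAt ℝ (fun p₁ => fderiv ℝ KK p₁ (lamL m n v)) pt₁ :=
    ((contDiffOn_fderiv_apply hprod.finsler₁.smooth hs₁ (lamL m n v)).differentiableOn
      (by norm_num)).differentiableAt (hs₁.mem_nhds ⟨hx1, hy1⟩)
  have h1 : HasFDerivAt (fun p => fderiv ℝ KK (lamL m n p) (lamL m n v))
      ((fderiv ℝ (fun p₁ => fderiv ℝ KK p₁ (lamL m n v)) pt₁).comp (lamL m n)) (x, y) :=
    (δ1.hasFDerivAt.comp (x, y) (lamL m n).hasFDerivAt :)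
  -- factor 2 : p ↦ dS f (KK (lamL p)) (HH (lamR p))
  have δ2 : DifferentiableAt ℝ (fun q : ℝ × ℝ => fderiv ℝ φ q ((1:ℝ), (0:ℝ))) z :=
    ((contDiffOn_fderiv_apply hprod.f_smooth hT ((1:ℝ), (0:ℝ))).differentiableOn
      (by norm_num)).differentiableAt (hT.mem_nhds hzT)
  have h2 : HasFDerivAt (fun p => dS f (KK (lamL m n p)) (HH (lamR m n p)))
      ((fderiv ℝ (fun q : ℝ × ℝ => fderiv ℝ φ q ((1:ℝ), (0:ℝ))) z).comp
        ((((fderiv ℝ KK pt₁).comp (lamL m n)).prod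
          ((fderiv ℝ HH pt₂).comp (lamR m n))))) (x, y) :=
    (δ2.hasFDerivAt.comp (x, y) hΨ :)
  -- factor 3 : p ↦ fderiv HH (lamR p) (lamR v)
  have δ3 : DifferentiableAt ℝ (fun p₂ => fderiv ℝ HH p₂ (lamR m n v)) pt₂ :=
    ((contDiffOn_fderiv_apply hprod.finsler₂.smooth hs₂ (lamR m n v)).differentiableOn
      (by norm_num)).differentiableAt (hs₂.mem_nhds ⟨hx2, hy2⟩)
  have h3 : HasFDerivAt (fun p => fderiv ℝ HH (lamR m n p) (lamR m n v))
      ((fderiv ℝ (fun p₂ => fderiv ℝ HH p₂ (lamR m n v)) pt₂).comp (lamR m n)) (x, y) :=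
    (δ3.hasFDerivAt.comp (x, y) (lamR m n).hasFDerivAt :)
  -- factor 4 : p ↦ dT f ...
  have δ4 : DifferentiableAt ℝ (fun q : ℝ × ℝ => fderiv ℝ φ q ((0:ℝ), (1:ℝ))) z :=
    ((contDiffOn_fderiv_apply hprod.f_smooth hT ((0:ℝ), (1:ℝ))).differentiableOn
      (by norm_num)).differentiableAt (hT.mem_nhds hzT)
  have h4 : HasFDerivAt (fun p => dT f (KK (lamL m n p)) (HH (lamR m n p)))
      ((fderiv ℝ (fun q : ℝ × ℝ => fderiv ℝ φ q ((0:ℝ), (1:ℝ))) z).comp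
        ((((fderiv ℝ KK pt₁).comp (lamL m n)).prod
          ((fderiv ℝ HH pt₂).comp (lamR m n))))) (x, y) :=
    (δ4.hasFDerivAt.comp (x, y) hΨ :)
  have hprod1 := h1.fun_mul h2
  have hprod2 := h3.fun_mul h4
  have htot := hprod1.fun_add hprod2
  rw [htot.fderiv]
  simp only [ContinuousLinearMap.add_apply, ContinuousLinearMap.smul_apply,
    ContinuousLinearMap.coe_comp', Function.comp_apply, ContinuousLinearMap.prod_apply,
    smul_eq_mul]
  rw [clm_pair (fderiv ℝ (fun q : ℝ × ℝ => fderiv ℝ φ q ((1:ℝ), (0:ℝ))) z) _ _,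
    clm_pair (fderiv ℝ (fun q : ℝ × ℝ => fderiv ℝ φ q ((0:ℝ), (1:ℝ))) z) _ _]
  have hsym : fderiv ℝ (fun q : ℝ × ℝ => fderiv ℝ φ q ((0:ℝ), (1:ℝ))) z ((1:ℝ), (0:ℝ))
      = fderiv ℝ (fun q : ℝ × ℝ => fderiv ℝ φ q ((1:ℝ), (0:ℝ))) z ((0:ℝ), (1:ℝ)) :=
    mink_dST_symm hprod hzT.1 hzT.2
  rw [hsym]
  have eSS : fderiv ℝ (fun q : ℝ × ℝ => fderiv ℝ φ q ((1:ℝ), (0:ℝ))) z ((1:ℝ), (0:ℝ))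
      = dSS f (F₁ (x ∘ Sum.inl) (y ∘ Sum.inl) ^ 2) (F₂ (x ∘ Sum.inr) (y ∘ Sum.inr) ^ 2) := rfl
  have eST : fderiv ℝ (fun q : ℝ × ℝ => fderiv ℝ φ q ((1:ℝ), (0:ℝ))) z ((0:ℝ), (1:ℝ))
      = dST f (F₁ (x ∘ Sum.inl) (y ∘ Sum.inl) ^ 2) (F₂ (x ∘ Sum.inr) (y ∘ Sum.inr) ^ 2) := rfl
  have eTT : fderiv ℝ (fun q : ℝ × ℝ => fderiv ℝ φ q ((0:ℝ), (1:ℝ))) z ((0:ℝ), (1:ℝ))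
      = dTT f (F₁ (x ∘ Sum.inl) (y ∘ Sum.inl) ^ 2) (F₂ (x ∘ Sum.inr) (y ∘ Sum.inr) ^ 2) := rfl
  rw [eSS, eST, eTT]
  have e1 : lamL m n ((x, y) : (Fin m ⊕ Fin n → ℝ) × (Fin m ⊕ Fin n → ℝ))
      = ((x ∘ Sum.inl, y ∘ Sum.inl) : (Fin m → ℝ) × (Fin m → ℝ)) := rfl
  have e2 : lamR m n ((x, y) : (Fin m ⊕ Fin n → ℝ) × (Fin m ⊕ Fin n → ℝ))
      = ((x ∘ Sum.inr, y ∘ Sum.inr) : (Fin n → ℝ) × (Fin n → ℝ)) := rfl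
  have e3 : lamL m n v = ((v.1 ∘ Sum.inl, v.2 ∘ Sum.inl) : (Fin m → ℝ) × (Fin m → ℝ)) := rfl
  have e4 : lamR m n v = ((v.1 ∘ Sum.inr, v.2 ∘ Sum.inr) : (Fin n → ℝ) × (Fin n → ℝ)) := rfl
  have e5 : lamL m n w = ((w.1 ∘ Sum.inl, w.2 ∘ Sum.inl) : (Fin m → ℝ) × (Fin m → ℝ)) := rfl
  have e6 : lamR m n w = ((w.1 ∘ Sum.inr, w.2 ∘ Sum.inr) : (Fin n → ℝ) × (Fin n → ℝ)) := rfl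
  rw [hpt₁, hpt₂] at *
  rw [e1, e2, e3, e4, e5, e6]
  ring
end Mink2

section Helpers
theorem single_inl_comp_inl {m n : ℕ} (i : Fin m) :
    ((Pi.single (Sum.inl i) (1:ℝ) : (Fin m ⊕ Fin n) → ℝ) ∘ Sum.inl) = Pi.single i 1 := by
  funext j
  simp [Function.comp, Pi.single_apply]

theorem single_inl_comp_inr {m n : ℕ} (i : Fin m) :
    ((Pi.single (Sum.inl i) (1:ℝ) : (Fin m ⊕ Fin n) → ℝ) ∘ Sum.inr) = 0 := by
  funext j
  simp [Function.comp, Pi.single_apply]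

theorem single_inr_comp_inl {m n : ℕ} (i : Fin n) :
    ((Pi.single (Sum.inr i) (1:ℝ) : (Fin m ⊕ Fin n) → ℝ) ∘ Sum.inl) = 0 := by
  funext j
  simp [Function.comp, Pi.single_apply]

theorem single_inr_comp_inr {m n : ℕ} (i : Fin n) :
    ((Pi.single (Sum.inr i) (1:ℝ) : (Fin m ⊕ Fin n) → ℝ) ∘ Sum.inr) = Pi.single i 1 := by
  funext j
  simp [Function.comp, Pi.single_apply]

theorem zero_comp_inl {m n : ℕ} :
    ((0 : (Fin m ⊕ Fin n) → ℝ) ∘ Sum.inl) = 0 := rfl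
theorem zero_comp_inr {m n : ℕ} :
    ((0 : (Fin m ⊕ Fin n) → ℝ) ∘ Sum.inr) = 0 := rfl

theorem fderiv_apply_zero_vec {E : Type*} [NormedAddCommGroup E] [NormedSpace ℝ E]
    (u : E → ℝ) (p : E) : fderiv ℝ u p (0:E) = 0 :=
  (fderiv ℝ u p).map_zero

theorem fderiv_fderiv_zero_vec {E : Type*} [NormedAddCommGroup E] [NormedSpace ℝ E]
    (u : E → ℝ) (p w : E) : fderiv ℝ (fun q => fderiv ℝ u q (0:E)) p w = 0 := by
  have : (fun q => fderiv ℝ u q (0:E)) = fun _ => (0:ℝ) := by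
    funext q; exact (fderiv ℝ u q).map_zero
  rw [this, fderiv_fun_const]
  rfl
end Helpers

theorem pair_zero {A B : Type*} [Zero A] [Zero B] : ((0, 0) : A × B) = 0 := rfl

section Entries
variable {m n : ℕ}
  {U₁ : Set (Fin m → ℝ)} {U₂ : Set (Fin n → ℝ)}
  {F₁ : (Fin m → ℝ) → (Fin m → ℝ) → ℝ} {F₂ : (Fin n → ℝ) → (Fin n → ℝ) → ℝ}
  {f : ℝ → ℝ → ℝ}
  {F : (Fin m ⊕ Fin n → ℝ) → (Fin m ⊕ Fin n → ℝ) → ℝ}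
  {x y : Fin m ⊕ Fin n → ℝ}

-- abbreviations used in statements are spelled out each time

theorem mink_y_ne (hy1 : y ∘ Sum.inl ≠ 0) : y ≠ 0 := by
  intro h; exact hy1 (by rw [h]; rfl)

theorem mink_mem (hx1 : x ∘ Sum.inl ∈ U₁) (hx2 : x ∘ Sum.inr ∈ U₂) :
    x ∈ {x : Fin m ⊕ Fin n → ℝ | (x ∘ Sum.inl) ∈ U₁ ∧ (x ∘ Sum.inr) ∈ U₂} := ⟨hx1, hx2⟩

theorem mink_fund_eq (hprod : IsMinkowskianProduct U₁ U₂ F₁ F₂ f F)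
    (hx1 : x ∘ Sum.inl ∈ U₁) (hx2 : x ∘ Sum.inr ∈ U₂)
    (hy1 : y ∘ Sum.inl ≠ 0) (hy2 : y ∘ Sum.inr ≠ 0) (α β : Fin m ⊕ Fin n) :
    fundTensor F x y α β =
      fderiv ℝ (fun p => fderiv ℝ (fun q : (Fin m ⊕ Fin n → ℝ) × (Fin m ⊕ Fin n → ℝ) =>
        F q.1 q.2 ^ 2) p (0, Pi.single β 1)) (x, y) (0, Pi.single α 1) :=
  pdy_pdy_eq hprod.finsler.smooth (finsler_isOpen_dom hprod.finsler)
    ⟨mink_mem hx1 hx2, mink_y_ne hy1⟩ α β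

theorem mink_cxy_eq (hprod : IsMinkowskianProduct U₁ U₂ F₁ F₂ f F)
    (hx1 : x ∘ Sum.inl ∈ U₁) (hx2 : x ∘ Sum.inr ∈ U₂)
    (hy1 : y ∘ Sum.inl ≠ 0) (hy2 : y ∘ Sum.inr ≠ 0) (γ β : Fin m ⊕ Fin n) :
    pdx (pdy (fun a b => F a b ^ 2) β) γ x y =
      fderiv ℝ (fun p => fderiv ℝ (fun q : (Fin m ⊕ Fin n → ℝ) × (Fin m ⊕ Fin n → ℝ) =>
        F q.1 q.2 ^ 2) p (0, Pi.single β 1)) (x, y) (Pi.single γ 1, 0) :=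
  pdx_pdy_eq hprod.finsler.smooth (finsler_isOpen_dom hprod.finsler)
    ⟨mink_mem hx1 hx2, mink_y_ne hy1⟩ γ β

end Entries

section Entries2
variable {m n : ℕ}
  {U₁ : Set (Fin m → ℝ)} {U₂ : Set (Fin n → ℝ)}
  {F₁ : (Fin m → ℝ) → (Fin m → ℝ) → ℝ} {F₂ : (Fin n → ℝ) → (Fin n → ℝ) → ℝ}
  {f : ℝ → ℝ → ℝ}
  {F : (Fin m ⊕ Fin n → ℝ) → (Fin m ⊕ Fin n → ℝ) → ℝ}
  {x y : Fin m ⊕ Fin n → ℝ}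

theorem entry_LL (hprod : IsMinkowskianProduct U₁ U₂ F₁ F₂ f F)
    (hx1 : x ∘ Sum.inl ∈ U₁) (hx2 : x ∘ Sum.inr ∈ U₂)
    (hy1 : y ∘ Sum.inl ≠ 0) (hy2 : y ∘ Sum.inr ≠ 0) (i j : Fin m) :
    fundTensor F x y (Sum.inl i) (Sum.inl j) =
      fundTensor F₁ (x ∘ Sum.inl) (y ∘ Sum.inl) i j
        * dS f (F₁ (x ∘ Sum.inl) (y ∘ Sum.inl) ^ 2) (F₂ (x ∘ Sum.inr) (y ∘ Sum.inr) ^ 2)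
      + pdy (fun a b => F₁ a b ^ 2) j (x ∘ Sum.inl) (y ∘ Sum.inl)
        * (pdy (fun a b => F₁ a b ^ 2) i (x ∘ Sum.inl) (y ∘ Sum.inl)
          * dSS f (F₁ (x ∘ Sum.inl) (y ∘ Sum.inl) ^ 2) (F₂ (x ∘ Sum.inr) (y ∘ Sum.inr) ^ 2)) := by
  rw [mink_fund_eq hprod hx1 hx2 hy1 hy2, mink_d2 hprod hx1 hx2 hy1 hy2]
  dsimp only
  rw [single_inl_comp_inl, single_inl_comp_inl, single_inl_comp_inr, single_inl_comp_inr,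
    zero_comp_inl, zero_comp_inr]
  rw [pair_zero, fderiv_fderiv_zero_vec, fderiv_apply_zero_vec]
  simp only [fundTensor]
  rw [pdy_pdy_eq (x := x ∘ Sum.inl) (y := y ∘ Sum.inl) hprod.finsler₁.smooth
      (finsler_isOpen_dom hprod.finsler₁) ⟨hx1, hy1⟩ i j,
    pdy_eq (x := x ∘ Sum.inl) (y := y ∘ Sum.inl) (finsler_diffAt hprod.finsler₁ hx1 hy1) j,
    pdy_eq (x := x ∘ Sum.inl) (y := y ∘ Sum.inl) (finsler_diffAt hprod.finsler₁ hx1 hy1) i]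
  ring
end Entries2

section Entries3
variable {m n : ℕ}
  {U₁ : Set (Fin m → ℝ)} {U₂ : Set (Fin n → ℝ)}
  {F₁ : (Fin m → ℝ) → (Fin m → ℝ) → ℝ} {F₂ : (Fin n → ℝ) → (Fin n → ℝ) → ℝ}
  {f : ℝ → ℝ → ℝ}
  {F : (Fin m ⊕ Fin n → ℝ) → (Fin m ⊕ Fin n → ℝ) → ℝ}
  {x y : Fin m ⊕ Fin n → ℝ}

theorem entry_RR (hprod : IsMinkowskianProduct U₁ U₂ F₁ F₂ f F)
    (hx1 : x ∘ Sum.inl ∈ U₁) (hx2 : x ∘ Sum.inr ∈ U₂)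
    (hy1 : y ∘ Sum.inl ≠ 0) (hy2 : y ∘ Sum.inr ≠ 0) (i j : Fin n) :
    fundTensor F x y (Sum.inr i) (Sum.inr j) =
      fundTensor F₂ (x ∘ Sum.inr) (y ∘ Sum.inr) i j
        * dT f (F₁ (x ∘ Sum.inl) (y ∘ Sum.inl) ^ 2) (F₂ (x ∘ Sum.inr) (y ∘ Sum.inr) ^ 2)
      + pdy (fun a b => F₂ a b ^ 2) j (x ∘ Sum.inr) (y ∘ Sum.inr)
        * (pdy (fun a b => F₂ a b ^ 2) i (x ∘ Sum.inr) (y ∘ Sum.inr)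
          * dTT f (F₁ (x ∘ Sum.inl) (y ∘ Sum.inl) ^ 2) (F₂ (x ∘ Sum.inr) (y ∘ Sum.inr) ^ 2)) := by
  rw [mink_fund_eq hprod hx1 hx2 hy1 hy2, mink_d2 hprod hx1 hx2 hy1 hy2]
  dsimp only
  simp only [single_inr_comp_inl, single_inr_comp_inr, zero_comp_inl, zero_comp_inr,
    pair_zero, fderiv_fderiv_zero_vec, fderiv_apply_zero_vec, zero_mul, mul_zero,
    add_zero, zero_add]
  simp only [fundTensor]
  rw [pdy_pdy_eq (x := x ∘ Sum.inr) (y := y ∘ Sum.inr) hprod.finsler₂.smooth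
      (finsler_isOpen_dom hprod.finsler₂) ⟨hx2, hy2⟩ i j,
    pdy_eq (x := x ∘ Sum.inr) (y := y ∘ Sum.inr) (finsler_diffAt hprod.finsler₂ hx2 hy2) j,
    pdy_eq (x := x ∘ Sum.inr) (y := y ∘ Sum.inr) (finsler_diffAt hprod.finsler₂ hx2 hy2) i]

theorem entry_LR (hprod : IsMinkowskianProduct U₁ U₂ F₁ F₂ f F)
    (hx1 : x ∘ Sum.inl ∈ U₁) (hx2 : x ∘ Sum.inr ∈ U₂)
    (hy1 : y ∘ Sum.inl ≠ 0) (hy2 : y ∘ Sum.inr ≠ 0) (i : Fin m) (j : Fin n) :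
    fundTensor F x y (Sum.inl i) (Sum.inr j) =
      pdy (fun a b => F₂ a b ^ 2) j (x ∘ Sum.inr) (y ∘ Sum.inr)
        * (pdy (fun a b => F₁ a b ^ 2) i (x ∘ Sum.inl) (y ∘ Sum.inl)
          * dST f (F₁ (x ∘ Sum.inl) (y ∘ Sum.inl) ^ 2) (F₂ (x ∘ Sum.inr) (y ∘ Sum.inr) ^ 2)) := by
  rw [mink_fund_eq hprod hx1 hx2 hy1 hy2, mink_d2 hprod hx1 hx2 hy1 hy2]
  dsimp only
  simp only [single_inl_comp_inl, single_inl_comp_inr, single_inr_comp_inl, single_inr_comp_inr,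
    zero_comp_inl, zero_comp_inr, pair_zero, fderiv_fderiv_zero_vec, fderiv_apply_zero_vec,
    zero_mul, mul_zero, add_zero, zero_add]
  simp only [fderiv_fun_const, Pi.zero_apply, ContinuousLinearMap.zero_apply, zero_mul, zero_add]
  rw [pdy_eq (x := x ∘ Sum.inr) (y := y ∘ Sum.inr) (finsler_diffAt hprod.finsler₂ hx2 hy2) j,
    pdy_eq (x := x ∘ Sum.inl) (y := y ∘ Sum.inl) (finsler_diffAt hprod.finsler₁ hx1 hy1) i]

theorem entry_RL (hprod : IsMinkowskianProduct U₁ U₂ F₁ F₂ f F)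
    (hx1 : x ∘ Sum.inl ∈ U₁) (hx2 : x ∘ Sum.inr ∈ U₂)
    (hy1 : y ∘ Sum.inl ≠ 0) (hy2 : y ∘ Sum.inr ≠ 0) (i : Fin n) (j : Fin m) :
    fundTensor F x y (Sum.inr i) (Sum.inl j) =
      pdy (fun a b => F₁ a b ^ 2) j (x ∘ Sum.inl) (y ∘ Sum.inl)
        * (pdy (fun a b => F₂ a b ^ 2) i (x ∘ Sum.inr) (y ∘ Sum.inr)
          * dST f (F₁ (x ∘ Sum.inl) (y ∘ Sum.inl) ^ 2) (F₂ (x ∘ Sum.inr) (y ∘ Sum.inr) ^ 2)) := by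
  rw [mink_fund_eq hprod hx1 hx2 hy1 hy2, mink_d2 hprod hx1 hx2 hy1 hy2]
  dsimp only
  simp only [single_inl_comp_inl, single_inl_comp_inr, single_inr_comp_inl, single_inr_comp_inr,
    zero_comp_inl, zero_comp_inr, pair_zero, fderiv_fderiv_zero_vec, fderiv_apply_zero_vec,
    zero_mul, mul_zero, add_zero, zero_add, fderiv_fun_const, Pi.zero_apply,
    ContinuousLinearMap.zero_apply]
  rw [pdy_eq (x := x ∘ Sum.inl) (y := y ∘ Sum.inl) (finsler_diffAt hprod.finsler₁ hx1 hy1) j,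
    pdy_eq (x := x ∘ Sum.inr) (y := y ∘ Sum.inr) (finsler_diffAt hprod.finsler₂ hx2 hy2) i]
end Entries3

section Entries4
variable {m n : ℕ}
  {U₁ : Set (Fin m → ℝ)} {U₂ : Set (Fin n → ℝ)}
  {F₁ : (Fin m → ℝ) → (Fin m → ℝ) → ℝ} {F₂ : (Fin n → ℝ) → (Fin n → ℝ) → ℝ}
  {f : ℝ → ℝ → ℝ}
  {F : (Fin m ⊕ Fin n → ℝ) → (Fin m ⊕ Fin n → ℝ) → ℝ}
  {x y : Fin m ⊕ Fin n → ℝ}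

theorem entry_cLL (hprod : IsMinkowskianProduct U₁ U₂ F₁ F₂ f F)
    (hx1 : x ∘ Sum.inl ∈ U₁) (hx2 : x ∘ Sum.inr ∈ U₂)
    (hy1 : y ∘ Sum.inl ≠ 0) (hy2 : y ∘ Sum.inr ≠ 0) (j l : Fin m) :
    pdx (pdy (fun a b => F a b ^ 2) (Sum.inl j)) (Sum.inl l) x y =
      pdx (pdy (fun a b => F₁ a b ^ 2) j) l (x ∘ Sum.inl) (y ∘ Sum.inl)
        * dS f (F₁ (x ∘ Sum.inl) (y ∘ Sum.inl) ^ 2) (F₂ (x ∘ Sum.inr) (y ∘ Sum.inr) ^ 2)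
      + pdy (fun a b => F₁ a b ^ 2) j (x ∘ Sum.inl) (y ∘ Sum.inl)
        * (pdx (fun a b => F₁ a b ^ 2) l (x ∘ Sum.inl) (y ∘ Sum.inl)
          * dSS f (F₁ (x ∘ Sum.inl) (y ∘ Sum.inl) ^ 2) (F₂ (x ∘ Sum.inr) (y ∘ Sum.inr) ^ 2)) := by
  rw [mink_cxy_eq hprod hx1 hx2 hy1 hy2, mink_d2 hprod hx1 hx2 hy1 hy2]
  dsimp only
  simp only [single_inl_comp_inl, single_inl_comp_inr, single_inr_comp_inl, single_inr_comp_inr,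
    zero_comp_inl, zero_comp_inr, pair_zero, fderiv_fderiv_zero_vec, fderiv_apply_zero_vec,
    zero_mul, mul_zero, add_zero, zero_add, fderiv_const, Pi.zero_apply,
    ContinuousLinearMap.zero_apply]
  rw [pdx_pdy_eq (x := x ∘ Sum.inl) (y := y ∘ Sum.inl) hprod.finsler₁.smooth
      (finsler_isOpen_dom hprod.finsler₁) ⟨hx1, hy1⟩ l j,
    pdy_eq (x := x ∘ Sum.inl) (y := y ∘ Sum.inl) (finsler_diffAt hprod.finsler₁ hx1 hy1) j,
    pdx_eq (x := x ∘ Sum.inl) (y := y ∘ Sum.inl) (finsler_diffAt hprod.finsler₁ hx1 hy1) l]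

theorem entry_cRR (hprod : IsMinkowskianProduct U₁ U₂ F₁ F₂ f F)
    (hx1 : x ∘ Sum.inl ∈ U₁) (hx2 : x ∘ Sum.inr ∈ U₂)
    (hy1 : y ∘ Sum.inl ≠ 0) (hy2 : y ∘ Sum.inr ≠ 0) (j l : Fin n) :
    pdx (pdy (fun a b => F a b ^ 2) (Sum.inr j)) (Sum.inr l) x y =
      pdx (pdy (fun a b => F₂ a b ^ 2) j) l (x ∘ Sum.inr) (y ∘ Sum.inr)
        * dT f (F₁ (x ∘ Sum.inl) (y ∘ Sum.inl) ^ 2) (F₂ (x ∘ Sum.inr) (y ∘ Sum.inr) ^ 2)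
      + pdy (fun a b => F₂ a b ^ 2) j (x ∘ Sum.inr) (y ∘ Sum.inr)
        * (pdx (fun a b => F₂ a b ^ 2) l (x ∘ Sum.inr) (y ∘ Sum.inr)
          * dTT f (F₁ (x ∘ Sum.inl) (y ∘ Sum.inl) ^ 2) (F₂ (x ∘ Sum.inr) (y ∘ Sum.inr) ^ 2)) := by
  rw [mink_cxy_eq hprod hx1 hx2 hy1 hy2, mink_d2 hprod hx1 hx2 hy1 hy2]
  dsimp only
  simp only [single_inl_comp_inl, single_inl_comp_inr, single_inr_comp_inl, single_inr_comp_inr,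
    zero_comp_inl, zero_comp_inr, pair_zero, fderiv_fderiv_zero_vec, fderiv_apply_zero_vec,
    zero_mul, mul_zero, add_zero, zero_add, fderiv_const, Pi.zero_apply,
    ContinuousLinearMap.zero_apply]
  rw [pdx_pdy_eq (x := x ∘ Sum.inr) (y := y ∘ Sum.inr) hprod.finsler₂.smooth
      (finsler_isOpen_dom hprod.finsler₂) ⟨hx2, hy2⟩ l j,
    pdy_eq (x := x ∘ Sum.inr) (y := y ∘ Sum.inr) (finsler_diffAt hprod.finsler₂ hx2 hy2) j,
    pdx_eq (x := x ∘ Sum.inr) (y := y ∘ Sum.inr) (finsler_diffAt hprod.finsler₂ hx2 hy2) l]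

theorem entry_cLR (hprod : IsMinkowskianProduct U₁ U₂ F₁ F₂ f F)
    (hx1 : x ∘ Sum.inl ∈ U₁) (hx2 : x ∘ Sum.inr ∈ U₂)
    (hy1 : y ∘ Sum.inl ≠ 0) (hy2 : y ∘ Sum.inr ≠ 0) (j : Fin m) (l : Fin n) :
    pdx (pdy (fun a b => F a b ^ 2) (Sum.inl j)) (Sum.inr l) x y =
      pdy (fun a b => F₁ a b ^ 2) j (x ∘ Sum.inl) (y ∘ Sum.inl)
        * (pdx (fun a b => F₂ a b ^ 2) l (x ∘ Sum.inr) (y ∘ Sum.inr)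
          * dST f (F₁ (x ∘ Sum.inl) (y ∘ Sum.inl) ^ 2) (F₂ (x ∘ Sum.inr) (y ∘ Sum.inr) ^ 2)) := by
  rw [mink_cxy_eq hprod hx1 hx2 hy1 hy2, mink_d2 hprod hx1 hx2 hy1 hy2]
  dsimp only
  simp only [single_inl_comp_inl, single_inl_comp_inr, single_inr_comp_inl, single_inr_comp_inr,
    zero_comp_inl, zero_comp_inr, pair_zero, fderiv_fderiv_zero_vec, fderiv_apply_zero_vec,
    zero_mul, mul_zero, add_zero, zero_add, fderiv_fun_const, Pi.zero_apply,
    ContinuousLinearMap.zero_apply]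
  rw [pdy_eq (x := x ∘ Sum.inl) (y := y ∘ Sum.inl) (finsler_diffAt hprod.finsler₁ hx1 hy1) j,
    pdx_eq (x := x ∘ Sum.inr) (y := y ∘ Sum.inr) (finsler_diffAt hprod.finsler₂ hx2 hy2) l]

theorem entry_cRL (hprod : IsMinkowskianProduct U₁ U₂ F₁ F₂ f F)
    (hx1 : x ∘ Sum.inl ∈ U₁) (hx2 : x ∘ Sum.inr ∈ U₂)
    (hy1 : y ∘ Sum.inl ≠ 0) (hy2 : y ∘ Sum.inr ≠ 0) (j : Fin n) (l : Fin m) :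
    pdx (pdy (fun a b => F a b ^ 2) (Sum.inr j)) (Sum.inl l) x y =
      pdy (fun a b => F₂ a b ^ 2) j (x ∘ Sum.inr) (y ∘ Sum.inr)
        * (pdx (fun a b => F₁ a b ^ 2) l (x ∘ Sum.inl) (y ∘ Sum.inl)
          * dST f (F₁ (x ∘ Sum.inl) (y ∘ Sum.inl) ^ 2) (F₂ (x ∘ Sum.inr) (y ∘ Sum.inr) ^ 2)) := by
  rw [mink_cxy_eq hprod hx1 hx2 hy1 hy2, mink_d2 hprod hx1 hx2 hy1 hy2]
  dsimp only
  simp only [single_inl_comp_inl, single_inl_comp_inr, single_inr_comp_inl, single_inr_comp_inr,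
    zero_comp_inl, zero_comp_inr, pair_zero, fderiv_fderiv_zero_vec, fderiv_apply_zero_vec,
    zero_mul, mul_zero, add_zero, zero_add, fderiv_fun_const, Pi.zero_apply,
    ContinuousLinearMap.zero_apply]
  rw [pdy_eq (x := x ∘ Sum.inr) (y := y ∘ Sum.inr) (finsler_diffAt hprod.finsler₂ hx2 hy2) j,
    pdx_eq (x := x ∘ Sum.inl) (y := y ∘ Sum.inl) (finsler_diffAt hprod.finsler₁ hx1 hy1) l]

theorem entry_dL (hprod : IsMinkowskianProduct U₁ U₂ F₁ F₂ f F)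
    (hx1 : x ∘ Sum.inl ∈ U₁) (hx2 : x ∘ Sum.inr ∈ U₂)
    (hy1 : y ∘ Sum.inl ≠ 0) (hy2 : y ∘ Sum.inr ≠ 0) (l : Fin m) :
    pdx (fun a b => F a b ^ 2) (Sum.inl l) x y =
      pdx (fun a b => F₁ a b ^ 2) l (x ∘ Sum.inl) (y ∘ Sum.inl)
        * dS f (F₁ (x ∘ Sum.inl) (y ∘ Sum.inl) ^ 2) (F₂ (x ∘ Sum.inr) (y ∘ Sum.inr) ^ 2) := by
  rw [pdx_eq (x := x) (y := y)
    (finsler_diffAt hprod.finsler (mink_mem hx1 hx2) (mink_y_ne hy1)) (Sum.inl l)]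
  rw [mink_d1 hprod hx1 hx2 hy1 hy2]
  dsimp only
  simp only [single_inl_comp_inl, single_inl_comp_inr, zero_comp_inl, zero_comp_inr,
    pair_zero, fderiv_apply_zero_vec, zero_mul, mul_zero, add_zero, zero_add]
  rw [pdx_eq (x := x ∘ Sum.inl) (y := y ∘ Sum.inl) (finsler_diffAt hprod.finsler₁ hx1 hy1) l]

theorem entry_dR (hprod : IsMinkowskianProduct U₁ U₂ F₁ F₂ f F)
    (hx1 : x ∘ Sum.inl ∈ U₁) (hx2 : x ∘ Sum.inr ∈ U₂)
    (hy1 : y ∘ Sum.inl ≠ 0) (hy2 : y ∘ Sum.inr ≠ 0) (l : Fin n) :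
    pdx (fun a b => F a b ^ 2) (Sum.inr l) x y =
      pdx (fun a b => F₂ a b ^ 2) l (x ∘ Sum.inr) (y ∘ Sum.inr)
        * dT f (F₁ (x ∘ Sum.inl) (y ∘ Sum.inl) ^ 2) (F₂ (x ∘ Sum.inr) (y ∘ Sum.inr) ^ 2) := by
  rw [pdx_eq (x := x) (y := y)
    (finsler_diffAt hprod.finsler (mink_mem hx1 hx2) (mink_y_ne hy1)) (Sum.inr l)]
  rw [mink_d1 hprod hx1 hx2 hy1 hy2]
  dsimp only
  simp only [single_inr_comp_inl, single_inr_comp_inr, zero_comp_inl, zero_comp_inr,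
    pair_zero, fderiv_apply_zero_vec, zero_mul, mul_zero, add_zero, zero_add]
  rw [pdx_eq (x := x ∘ Sum.inr) (y := y ∘ Sum.inr) (finsler_diffAt hprod.finsler₂ hx2 hy2) l]

end Entries4

section KeyAlg
variable {κ₁ κ₂ : Type*} [Fintype κ₁] [Fintype κ₂] [DecidableEq κ₁] [DecidableEq κ₂]

theorem key_alg
    (M : Matrix (κ₁ ⊕ κ₂) (κ₁ ⊕ κ₂) ℝ) (g1 : Matrix κ₁ κ₁ ℝ) (g2 : Matrix κ₂ κ₂ ℝ)
    (a ax Y1 w1 v1 : κ₁ → ℝ) (b bx Y2 w2 v2 : κ₂ → ℝ)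
    (axy : κ₁ → κ₁ → ℝ) (bxy : κ₂ → κ₂ → ℝ) (cS cT cSS cST cTT : ℝ)
    (V : κ₁ ⊕ κ₂ → ℝ)
    (hMLL : ∀ i j, M (Sum.inl i) (Sum.inl j) = g1 i j * cS + a j * (a i * cSS))
    (hMLR : ∀ i j, M (Sum.inl i) (Sum.inr j) = b j * (a i * cST))
    (hMRL : ∀ i j, M (Sum.inr i) (Sum.inl j) = a j * (b i * cST))
    (hMRR : ∀ i j, M (Sum.inr i) (Sum.inr j) = g2 i j * cT + b j * (b i * cTT))
    (hVL : ∀ i, V (Sum.inl i) = ((∑ l, (axy i l * cS + a i * (ax l * cSS)) * Y1 l)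
        + ∑ l, (a i * (bx l * cST)) * Y2 l) - ax i * cS)
    (hVR : ∀ i, V (Sum.inr i) = ((∑ l, (b i * (ax l * cST)) * Y1 l)
        + ∑ l, (bxy i l * cT + b i * (bx l * cTT)) * Y2 l) - bx i * cT)
    (hv1 : ∀ j, v1 j = (∑ l, axy j l * Y1 l) - ax j)
    (hv2 : ∀ j, v2 j = (∑ l, bxy j l * Y2 l) - bx j)
    (hE1a : ∀ j, ∑ l, Y1 l * g1 l j = a j)
    (hE1b : ∀ j, ∑ l, Y2 l * g2 l j = b j)
    (hE3a : ∀ γ, ∑ l, Y1 l * axy l γ = 2 * ax γ)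
    (hE3b : ∀ γ, ∑ l, Y2 l * bxy l γ = 2 * bx γ)
    (hw1 : ∀ l, ∑ j, g1 l j * w1 j = 1 / 2 * v1 l)
    (hw2 : ∀ l, ∑ j, g2 l j * w2 j = 1 / 2 * v2 l) :
    M *ᵥ (fun β => 2 * Sum.elim w1 w2 β) = V := by
  -- the two scalar identities
  have hYv1 : ∑ l, Y1 l * v1 l = ∑ l, ax l * Y1 l := by
    calc ∑ l, Y1 l * v1 l
        = ∑ l, ((∑ γ, Y1 l * (axy l γ * Y1 γ)) - Y1 l * ax l) := by
          refine Finset.sum_congr rfl fun l _ => ?_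
          rw [hv1 l, mul_sub, Finset.mul_sum]
      _ = (∑ l, ∑ γ, Y1 l * (axy l γ * Y1 γ)) - ∑ l, Y1 l * ax l := by
          rw [Finset.sum_sub_distrib]
      _ = (∑ γ, (∑ l, Y1 l * axy l γ) * Y1 γ) - ∑ l, Y1 l * ax l := by
          rw [Finset.sum_comm]
          congr 1
          refine Finset.sum_congr rfl fun γ _ => ?_
          rw [Finset.sum_mul]
          exact Finset.sum_congr rfl fun l _ => by ring
      _ = (∑ γ, (2 * ax γ) * Y1 γ) - ∑ l, Y1 l * ax l := by
          congr 1
          exact Finset.sum_congr rfl fun γ _ => by rw [hE3a γ]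
      _ = ∑ l, ax l * Y1 l := by
          rw [← Finset.sum_sub_distrib]
          exact Finset.sum_congr rfl fun l _ => by ring
  have hYv2 : ∑ l, Y2 l * v2 l = ∑ l, bx l * Y2 l := by
    calc ∑ l, Y2 l * v2 l
        = ∑ l, ((∑ γ, Y2 l * (bxy l γ * Y2 γ)) - Y2 l * bx l) := by
          refine Finset.sum_congr rfl fun l _ => ?_
          rw [hv2 l, mul_sub, Finset.mul_sum]
      _ = (∑ l, ∑ γ, Y2 l * (bxy l γ * Y2 γ)) - ∑ l, Y2 l * bx l := by
          rw [Finset.sum_sub_distrib]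
      _ = (∑ γ, (∑ l, Y2 l * bxy l γ) * Y2 γ) - ∑ l, Y2 l * bx l := by
          rw [Finset.sum_comm]
          congr 1
          refine Finset.sum_congr rfl fun γ _ => ?_
          rw [Finset.sum_mul]
          exact Finset.sum_congr rfl fun l _ => by ring
      _ = (∑ γ, (2 * bx γ) * Y2 γ) - ∑ l, Y2 l * bx l := by
          congr 1
          exact Finset.sum_congr rfl fun γ _ => by rw [hE3b γ]
      _ = ∑ l, bx l * Y2 l := by
          rw [← Finset.sum_sub_distrib]
          exact Finset.sum_congr rfl fun l _ => by ring
  have hS1 : ∑ j, a j * w1 j = 1 / 2 * ∑ l, ax l * Y1 l := by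
    calc ∑ j, a j * w1 j
        = ∑ j, (∑ l, Y1 l * g1 l j) * w1 j :=
          Finset.sum_congr rfl fun j _ => by rw [hE1a j]
      _ = ∑ j, ∑ l, Y1 l * (g1 l j * w1 j) := by
          refine Finset.sum_congr rfl fun j _ => ?_
          rw [Finset.sum_mul]
          exact Finset.sum_congr rfl fun l _ => by ring
      _ = ∑ l, Y1 l * (∑ j, g1 l j * w1 j) := by
          rw [Finset.sum_comm]
          exact Finset.sum_congr rfl fun l _ => by rw [Finset.mul_sum]
      _ = ∑ l, Y1 l * (1 / 2 * v1 l) :=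
          Finset.sum_congr rfl fun l _ => by rw [hw1 l]
      _ = 1 / 2 * ∑ l, Y1 l * v1 l := by
          rw [Finset.mul_sum]
          exact Finset.sum_congr rfl fun l _ => by ring
      _ = 1 / 2 * ∑ l, ax l * Y1 l := by rw [hYv1]
  have hS2 : ∑ j, b j * w2 j = 1 / 2 * ∑ l, bx l * Y2 l := by
    calc ∑ j, b j * w2 j
        = ∑ j, (∑ l, Y2 l * g2 l j) * w2 j :=
          Finset.sum_congr rfl fun j _ => by rw [hE1b j]
      _ = ∑ j, ∑ l, Y2 l * (g2 l j * w2 j) := by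
          refine Finset.sum_congr rfl fun j _ => ?_
          rw [Finset.sum_mul]
          exact Finset.sum_congr rfl fun l _ => by ring
      _ = ∑ l, Y2 l * (∑ j, g2 l j * w2 j) := by
          rw [Finset.sum_comm]
          exact Finset.sum_congr rfl fun l _ => by rw [Finset.mul_sum]
      _ = ∑ l, Y2 l * (1 / 2 * v2 l) :=
          Finset.sum_congr rfl fun l _ => by rw [hw2 l]
      _ = 1 / 2 * ∑ l, Y2 l * v2 l := by
          rw [Finset.mul_sum]
          exact Finset.sum_congr rfl fun l _ => by ring
      _ = 1 / 2 * ∑ l, bx l * Y2 l := by rw [hYv2]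
  funext α
  cases α with
  | inl i =>
    have : (M *ᵥ fun β => 2 * Sum.elim w1 w2 β) (Sum.inl i)
        = ∑ β, M (Sum.inl i) β * (2 * Sum.elim w1 w2 β) := by
      simp [Matrix.mulVec, dotProduct]
    rw [this, Fintype.sum_sum_type]
    simp only [Sum.elim_inl, Sum.elim_inr]
    rw [hVL i]
    calc (∑ j, M (Sum.inl i) (Sum.inl j) * (2 * w1 j))
          + ∑ j, M (Sum.inl i) (Sum.inr j) * (2 * w2 j)
        = (∑ j, (cS * (2 * (g1 i j * w1 j)) + (a i * cSS) * (2 * (a j * w1 j))))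
          + ∑ j, ((a i * cST) * (2 * (b j * w2 j))) := by
          congr 1
          · exact Finset.sum_congr rfl fun j _ => by rw [hMLL i j]; ring
          · exact Finset.sum_congr rfl fun j _ => by rw [hMLR i j]; ring
      _ = cS * (2 * (∑ j, g1 i j * w1 j)) + (a i * cSS) * (2 * ∑ j, a j * w1 j)
          + (a i * cST) * (2 * ∑ j, b j * w2 j) := by
          rw [Finset.sum_add_distrib]
          simp only [← Finset.mul_sum]
      _ = cS * v1 i + (a i * cSS) * (∑ l, ax l * Y1 l)
          + (a i * cST) * (∑ l, bx l * Y2 l) := by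
          rw [hw1 i, hS1, hS2]; ring
      _ = ((∑ l, (axy i l * cS + a i * (ax l * cSS)) * Y1 l)
          + ∑ l, (a i * (bx l * cST)) * Y2 l) - ax i * cS := by
          rw [hv1 i]
          rw [show (∑ l, (axy i l * cS + a i * (ax l * cSS)) * Y1 l)
              = cS * (∑ l, axy i l * Y1 l) + (a i * cSS) * ∑ l, ax l * Y1 l by
            rw [Finset.mul_sum, Finset.mul_sum, ← Finset.sum_add_distrib]
            exact Finset.sum_congr rfl fun l _ => by ring]
          rw [show (∑ l, (a i * (bx l * cST)) * Y2 l)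
              = (a i * cST) * ∑ l, bx l * Y2 l by
            rw [Finset.mul_sum]
            exact Finset.sum_congr rfl fun l _ => by ring]
          ring
  | inr i =>
    have : (M *ᵥ fun β => 2 * Sum.elim w1 w2 β) (Sum.inr i)
        = ∑ β, M (Sum.inr i) β * (2 * Sum.elim w1 w2 β) := by
      simp [Matrix.mulVec, dotProduct]
    rw [this, Fintype.sum_sum_type]
    simp only [Sum.elim_inl, Sum.elim_inr]
    rw [hVR i]
    calc (∑ j, M (Sum.inr i) (Sum.inl j) * (2 * w1 j))
          + ∑ j, M (Sum.inr i) (Sum.inr j) * (2 * w2 j)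
        = (∑ j, ((b i * cST) * (2 * (a j * w1 j))))
          + ∑ j, (cT * (2 * (g2 i j * w2 j)) + (b i * cTT) * (2 * (b j * w2 j))) := by
          congr 1
          · exact Finset.sum_congr rfl fun j _ => by rw [hMRL i j]; ring
          · exact Finset.sum_congr rfl fun j _ => by rw [hMRR i j]; ring
      _ = (b i * cST) * (2 * ∑ j, a j * w1 j)
          + (cT * (2 * (∑ j, g2 i j * w2 j)) + (b i * cTT) * (2 * ∑ j, b j * w2 j)) := by
          rw [Finset.sum_add_distrib]
          simp only [← Finset.mul_sum]
      _ = (b i * cST) * (∑ l, ax l * Y1 l) + cT * v2 i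
          + (b i * cTT) * (∑ l, bx l * Y2 l) := by
          rw [hw2 i, hS1, hS2]; ring
      _ = ((∑ l, (b i * (ax l * cST)) * Y1 l)
          + ∑ l, (bxy i l * cT + b i * (bx l * cTT)) * Y2 l) - bx i * cT := by
          rw [hv2 i]
          rw [show (∑ l, (bxy i l * cT + b i * (bx l * cTT)) * Y2 l)
              = cT * (∑ l, bxy i l * Y2 l) + (b i * cTT) * ∑ l, bx l * Y2 l by
            rw [Finset.mul_sum, Finset.mul_sum, ← Finset.sum_add_distrib]
            exact Finset.sum_congr rfl fun l _ => by ring]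
          rw [show (∑ l, (b i * (ax l * cST)) * Y1 l)
              = (b i * cST) * ∑ l, ax l * Y1 l by
            rw [Finset.mul_sum]
            exact Finset.sum_congr rfl fun l _ => by ring]
          ring
end KeyAlg

section SpraySplit
variable {m n : ℕ}
  {U₁ : Set (Fin m → ℝ)} {U₂ : Set (Fin n → ℝ)}
  {F₁ : (Fin m → ℝ) → (Fin m → ℝ) → ℝ} {F₂ : (Fin n → ℝ) → (Fin n → ℝ) → ℝ}
  {f : ℝ → ℝ → ℝ}
  {F : (Fin m ⊕ Fin n → ℝ) → (Fin m ⊕ Fin n → ℝ) → ℝ}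
  {x y : Fin m ⊕ Fin n → ℝ}

theorem spray_split (hprod : IsMinkowskianProduct U₁ U₂ F₁ F₂ f F)
    (hx1 : x ∘ Sum.inl ∈ U₁) (hx2 : x ∘ Sum.inr ∈ U₂)
    (hy1 : y ∘ Sum.inl ≠ 0) (hy2 : y ∘ Sum.inr ≠ 0) (α : Fin m ⊕ Fin n) :
    spray F α x y = Sum.elim (fun i => spray F₁ i (x ∘ Sum.inl) (y ∘ Sum.inl))
      (fun i' => spray F₂ i' (x ∘ Sum.inr) (y ∘ Sum.inr)) α := by
  classical
  set g1 : Matrix (Fin m) (Fin m) ℝ := fundTensor F₁ (x ∘ Sum.inl) (y ∘ Sum.inl) with hg1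
  set g2 : Matrix (Fin n) (Fin n) ℝ := fundTensor F₂ (x ∘ Sum.inr) (y ∘ Sum.inr) with hg2
  set M : Matrix (Fin m ⊕ Fin n) (Fin m ⊕ Fin n) ℝ := fundTensor F x y with hM
  set v1 : Fin m → ℝ := fun j =>
    (∑ l, pdx (pdy (fun a b => F₁ a b ^ 2) j) l (x ∘ Sum.inl) (y ∘ Sum.inl) * y (Sum.inl l))
      - pdx (fun a b => F₁ a b ^ 2) j (x ∘ Sum.inl) (y ∘ Sum.inl) with hv1def
  set v2 : Fin n → ℝ := fun j =>
    (∑ l, pdx (pdy (fun a b => F₂ a b ^ 2) j) l (x ∘ Sum.inr) (y ∘ Sum.inr) * y (Sum.inr l))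
      - pdx (fun a b => F₂ a b ^ 2) j (x ∘ Sum.inr) (y ∘ Sum.inr) with hv2def
  set w1 : Fin m → ℝ := fun i => spray F₁ i (x ∘ Sum.inl) (y ∘ Sum.inl) with hw1def
  set w2 : Fin n → ℝ := fun i => spray F₂ i (x ∘ Sum.inr) (y ∘ Sum.inr) with hw2def
  set V : Fin m ⊕ Fin n → ℝ := fun β =>
    (∑ γ, pdx (pdy (fun a b => F a b ^ 2) β) γ x y * y γ)
      - pdx (fun a b => F a b ^ 2) β x y with hVdef
  have hu1 : IsUnit g1.det :=
    isUnit_iff_ne_zero.2 (ne_of_gt (hprod.finsler₁.posDef _ hx1 _ hy1).det_pos)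
  have hu2 : IsUnit g2.det :=
    isUnit_iff_ne_zero.2 (ne_of_gt (hprod.finsler₂.posDef _ hx2 _ hy2).det_pos)
  have huM : IsUnit M.det :=
    isUnit_iff_ne_zero.2 (ne_of_gt
      ((hprod.finsler.posDef _ (mink_mem hx1 hx2) _ (mink_y_ne hy1)).det_pos))
  have hw1eq : w1 = fun i => 1 / 2 * (g1⁻¹ *ᵥ v1) i := by
    funext i
    show spray F₁ i (x ∘ Sum.inl) (y ∘ Sum.inl) = _
    rw [spray]
    rfl
  have hw2eq : w2 = fun i => 1 / 2 * (g2⁻¹ *ᵥ v2) i := by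
    funext i
    show spray F₂ i (x ∘ Sum.inr) (y ∘ Sum.inr) = _
    rw [spray]
    rfl
  have hgw1 : ∀ l, ∑ j, g1 l j * w1 j = 1 / 2 * v1 l := by
    intro l
    have h1 : g1 *ᵥ w1 = (1 / 2 : ℝ) • v1 := by
      rw [hw1eq]
      have : (fun i => 1 / 2 * (g1⁻¹ *ᵥ v1) i) = (1 / 2 : ℝ) • (g1⁻¹ *ᵥ v1) := rfl
      rw [this, Matrix.mulVec_smul, Matrix.mulVec_mulVec, Matrix.mul_nonsing_inv _ hu1,
        Matrix.one_mulVec]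
    have := congrFun h1 l
    simpa [Matrix.mulVec, dotProduct] using this
  have hgw2 : ∀ l, ∑ j, g2 l j * w2 j = 1 / 2 * v2 l := by
    intro l
    have h1 : g2 *ᵥ w2 = (1 / 2 : ℝ) • v2 := by
      rw [hw2eq]
      have : (fun i => 1 / 2 * (g2⁻¹ *ᵥ v2) i) = (1 / 2 : ℝ) • (g2⁻¹ *ᵥ v2) := rfl
      rw [this, Matrix.mulVec_smul, Matrix.mulVec_mulVec, Matrix.mul_nonsing_inv _ hu2,
        Matrix.one_mulVec]
    have := congrFun h1 l
    simpa [Matrix.mulVec, dotProduct] using this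
  have hVL : ∀ i, V (Sum.inl i) =
      ((∑ l, (pdx (pdy (fun a b => F₁ a b ^ 2) i) l (x ∘ Sum.inl) (y ∘ Sum.inl)
            * dS f (F₁ (x ∘ Sum.inl) (y ∘ Sum.inl) ^ 2) (F₂ (x ∘ Sum.inr) (y ∘ Sum.inr) ^ 2)
          + pdy (fun a b => F₁ a b ^ 2) i (x ∘ Sum.inl) (y ∘ Sum.inl)
            * (pdx (fun a b => F₁ a b ^ 2) l (x ∘ Sum.inl) (y ∘ Sum.inl)
              * dSS f (F₁ (x ∘ Sum.inl) (y ∘ Sum.inl) ^ 2) (F₂ (x ∘ Sum.inr) (y ∘ Sum.inr) ^ 2)))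
          * y (Sum.inl l))
        + ∑ l, (pdy (fun a b => F₁ a b ^ 2) i (x ∘ Sum.inl) (y ∘ Sum.inl)
            * (pdx (fun a b => F₂ a b ^ 2) l (x ∘ Sum.inr) (y ∘ Sum.inr)
              * dST f (F₁ (x ∘ Sum.inl) (y ∘ Sum.inl) ^ 2) (F₂ (x ∘ Sum.inr) (y ∘ Sum.inr) ^ 2)))
          * y (Sum.inr l))
      - pdx (fun a b => F₁ a b ^ 2) i (x ∘ Sum.inl) (y ∘ Sum.inl)
        * dS f (F₁ (x ∘ Sum.inl) (y ∘ Sum.inl) ^ 2) (F₂ (x ∘ Sum.inr) (y ∘ Sum.inr) ^ 2) := by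
    intro i
    rw [hVdef]
    dsimp only
    rw [Fintype.sum_sum_type]
    rw [entry_dL hprod hx1 hx2 hy1 hy2 i]
    congr 1
    congr 1
    · exact Finset.sum_congr rfl fun l _ => by rw [entry_cLL hprod hx1 hx2 hy1 hy2 i l]
    · exact Finset.sum_congr rfl fun l _ => by rw [entry_cLR hprod hx1 hx2 hy1 hy2 i l]
  have hVR : ∀ i, V (Sum.inr i) =
      ((∑ l, (pdy (fun a b => F₂ a b ^ 2) i (x ∘ Sum.inr) (y ∘ Sum.inr)
            * (pdx (fun a b => F₁ a b ^ 2) l (x ∘ Sum.inl) (y ∘ Sum.inl)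
              * dST f (F₁ (x ∘ Sum.inl) (y ∘ Sum.inl) ^ 2) (F₂ (x ∘ Sum.inr) (y ∘ Sum.inr) ^ 2)))
          * y (Sum.inl l))
        + ∑ l, (pdx (pdy (fun a b => F₂ a b ^ 2) i) l (x ∘ Sum.inr) (y ∘ Sum.inr)
            * dT f (F₁ (x ∘ Sum.inl) (y ∘ Sum.inl) ^ 2) (F₂ (x ∘ Sum.inr) (y ∘ Sum.inr) ^ 2)
          + pdy (fun a b => F₂ a b ^ 2) i (x ∘ Sum.inr) (y ∘ Sum.inr)
            * (pdx (fun a b => F₂ a b ^ 2) l (x ∘ Sum.inr) (y ∘ Sum.inr)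
              * dTT f (F₁ (x ∘ Sum.inl) (y ∘ Sum.inl) ^ 2) (F₂ (x ∘ Sum.inr) (y ∘ Sum.inr) ^ 2)))
          * y (Sum.inr l))
      - pdx (fun a b => F₂ a b ^ 2) i (x ∘ Sum.inr) (y ∘ Sum.inr)
        * dT f (F₁ (x ∘ Sum.inl) (y ∘ Sum.inl) ^ 2) (F₂ (x ∘ Sum.inr) (y ∘ Sum.inr) ^ 2) := by
    intro i
    rw [hVdef]
    dsimp only
    rw [Fintype.sum_sum_type]
    rw [entry_dR hprod hx1 hx2 hy1 hy2 i]
    congr 1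
    congr 1
    · exact Finset.sum_congr rfl fun l _ => by rw [entry_cRL hprod hx1 hx2 hy1 hy2 i l]
    · exact Finset.sum_congr rfl fun l _ => by rw [entry_cRR hprod hx1 hx2 hy1 hy2 i l]
  have hkey : M *ᵥ (fun β => 2 * Sum.elim w1 w2 β) = V := by
    refine key_alg M g1 g2
      (fun j => pdy (fun a b => F₁ a b ^ 2) j (x ∘ Sum.inl) (y ∘ Sum.inl))
      (fun l => pdx (fun a b => F₁ a b ^ 2) l (x ∘ Sum.inl) (y ∘ Sum.inl))
      (fun l => y (Sum.inl l)) w1 v1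
      (fun j => pdy (fun a b => F₂ a b ^ 2) j (x ∘ Sum.inr) (y ∘ Sum.inr))
      (fun l => pdx (fun a b => F₂ a b ^ 2) l (x ∘ Sum.inr) (y ∘ Sum.inr))
      (fun l => y (Sum.inr l)) w2 v2
      (fun j l => pdx (pdy (fun a b => F₁ a b ^ 2) j) l (x ∘ Sum.inl) (y ∘ Sum.inl))
      (fun j l => pdx (pdy (fun a b => F₂ a b ^ 2) j) l (x ∘ Sum.inr) (y ∘ Sum.inr))
      (dS f (F₁ (x ∘ Sum.inl) (y ∘ Sum.inl) ^ 2) (F₂ (x ∘ Sum.inr) (y ∘ Sum.inr) ^ 2))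
      (dT f (F₁ (x ∘ Sum.inl) (y ∘ Sum.inl) ^ 2) (F₂ (x ∘ Sum.inr) (y ∘ Sum.inr) ^ 2))
      (dSS f (F₁ (x ∘ Sum.inl) (y ∘ Sum.inl) ^ 2) (F₂ (x ∘ Sum.inr) (y ∘ Sum.inr) ^ 2))
      (dST f (F₁ (x ∘ Sum.inl) (y ∘ Sum.inl) ^ 2) (F₂ (x ∘ Sum.inr) (y ∘ Sum.inr) ^ 2))
      (dTT f (F₁ (x ∘ Sum.inl) (y ∘ Sum.inl) ^ 2) (F₂ (x ∘ Sum.inr) (y ∘ Sum.inr) ^ 2))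
      V
      (fun i j => entry_LL hprod hx1 hx2 hy1 hy2 i j)
      (fun i j => entry_LR hprod hx1 hx2 hy1 hy2 i j)
      (fun i j => entry_RL hprod hx1 hx2 hy1 hy2 i j)
      (fun i j => entry_RR hprod hx1 hx2 hy1 hy2 i j)
      hVL hVR (fun j => rfl) (fun j => rfl)
      (fun j => finsler_euler1 hprod.finsler₁ hx1 hy1 j)
      (fun j => finsler_euler1 hprod.finsler₂ hx2 hy2 j)
      (fun γ => finsler_euler3 hprod.finsler₁ hx1 hy1 γ)
      (fun γ => finsler_euler3 hprod.finsler₂ hx2 hy2 γ)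
      hgw1 hgw2
  have hinv : M⁻¹ *ᵥ V = fun β => 2 * Sum.elim w1 w2 β := by
    rw [← hkey, Matrix.mulVec_mulVec, Matrix.nonsing_inv_mul _ huM, Matrix.one_mulVec]
  have hsprayF : spray F α x y = 1 / 2 * (M⁻¹ *ᵥ V) α := by
    rw [spray]
    rfl
  rw [hsprayF, hinv]
  ring
end SpraySplit

section Smooth2
variable {κ : Type*} [Fintype κ] [DecidableEq κ]
  {U : Set (κ→ℝ)} {FF : (κ→ℝ)→(κ→ℝ)→ℝ} {x : κ→ℝ}

theorem mk_smooth (x : κ→ℝ) (s : Set ((κ→ℝ)×(κ→ℝ))) {u : (κ→ℝ)×(κ→ℝ) → ℝ}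
    (hu : ContDiffOn ℝ (⊤ : ℕ∞) u s) (hs : IsOpen s) (hmaps : ∀ y' : κ→ℝ, y' ≠ 0 → (x, y') ∈ s) :
    ContDiffOn ℝ (⊤ : ℕ∞) (fun y' => u (x, y')) {y' : κ→ℝ | y' ≠ 0} := by
  have hmk : ContDiffOn ℝ (⊤ : ℕ∞) (fun y' : κ→ℝ => ((x, y') : (κ→ℝ)×(κ→ℝ)))
      {y' : κ→ℝ | y' ≠ 0} := (contDiff_const.prodMk contDiff_id).contDiffOn
  exact hu.comp hmk fun y' hy' => hmaps y' hy'

theorem fund_entry_smooth (hF : IsFinslerMetric U FF) (hx : x ∈ U) (α β : κ) :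
    ContDiffOn ℝ (⊤ : ℕ∞) (fun y' => fundTensor FF x y' α β) {y' : κ→ℝ | y' ≠ 0} := by
  have hs := finsler_isOpen_dom hF
  have h1 := contDiffOn_fderiv_apply hF.smooth hs (0, Pi.single β 1)
  have h2 := contDiffOn_fderiv_apply h1 hs (0, Pi.single α 1)
  refine (mk_smooth x _ h2 hs fun y' hy' => ⟨hx, hy'⟩).congr fun y' hy' => ?_
  exact pdy_pdy_eq hF.smooth hs ⟨hx, hy'⟩ α β

theorem cxy_entry_smooth (hF : IsFinslerMetric U FF) (hx : x ∈ U) (β γ : κ) :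
    ContDiffOn ℝ (⊤ : ℕ∞) (fun y' => pdx (pdy (fun a b => FF a b ^ 2) β) γ x y')
      {y' : κ→ℝ | y' ≠ 0} := by
  have hs := finsler_isOpen_dom hF
  have h1 := contDiffOn_fderiv_apply hF.smooth hs (0, Pi.single β 1)
  have h2 := contDiffOn_fderiv_apply h1 hs (Pi.single γ 1, 0)
  refine (mk_smooth x _ h2 hs fun y' hy' => ⟨hx, hy'⟩).congr fun y' hy' => ?_
  exact pdx_pdy_eq hF.smooth hs ⟨hx, hy'⟩ γ β

theorem dx_entry_smooth (hF : IsFinslerMetric U FF) (hx : x ∈ U) (β : κ) :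
    ContDiffOn ℝ (⊤ : ℕ∞) (fun y' => pdx (fun a b => FF a b ^ 2) β x y')
      {y' : κ→ℝ | y' ≠ 0} := by
  have hs := finsler_isOpen_dom hF
  have h1 := contDiffOn_fderiv_apply hF.smooth hs (Pi.single β 1, 0)
  refine (mk_smooth x _ h1 hs fun y' hy' => ⟨hx, hy'⟩).congr fun y' hy' => ?_
  exact pdx_eq (finsler_diffAt hF hx hy') β

theorem det_smooth_of_entries {E : Type*} [NormedAddCommGroup E] [NormedSpace ℝ E]
    {A : E → Matrix κ κ ℝ} {s : Set E}
    (h : ∀ k l, ContDiffOn ℝ (⊤ : ℕ∞) (fun e => A e k l) s) :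
    ContDiffOn ℝ (⊤ : ℕ∞) (fun e => (A e).det) s := by
  have : (fun e => (A e).det) = fun e => ∑ σ : Equiv.Perm κ,
      ((Equiv.Perm.sign σ : ℤ) : ℝ) * ∏ i, A e (σ i) i := by
    funext e; exact Matrix.det_apply' (A e)
  rw [this]
  refine ContDiffOn.sum fun σ _ => ContDiffOn.mul contDiffOn_const ?_
  have := contDiffOn_prod (t := (Finset.univ : Finset κ))
    (f := fun i => fun e => A e (σ i) i) (s := s) (fun i _ => h (σ i) i)
  refine this.congr fun e he => ?_
  simp [Finset.prod_apply]

theorem inv_entry_smooth {E : Type*} [NormedAddCommGroup E] [NormedSpace ℝ E]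
    {A : E → Matrix κ κ ℝ} {s : Set E}
    (h : ∀ k l, ContDiffOn ℝ (⊤ : ℕ∞) (fun e => A e k l) s)
    (hdet : ∀ e ∈ s, (A e).det ≠ 0) (α β : κ) :
    ContDiffOn ℝ (⊤ : ℕ∞) (fun e => (A e)⁻¹ α β) s := by
  have hadj : ContDiffOn ℝ (⊤ : ℕ∞) (fun e => (A e).adjugate α β) s := by
    have : (fun e => (A e).adjugate α β)
        = fun e => ((A e).updateRow β (Pi.single α 1)).det := by
      funext e; rw [Matrix.adjugate_apply]
    rw [this]
    refine det_smooth_of_entries fun k l => ?_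
    by_cases hk : k = β
    · subst hk
      simp only [Matrix.updateRow_self]
      exact contDiffOn_const
    · refine (h k l).congr fun e he => ?_
      rw [Matrix.updateRow_apply, if_neg hk]
  have hdet' : ContDiffOn ℝ (⊤ : ℕ∞) (fun e => (A e).det) s := det_smooth_of_entries h
  have : (fun e => (A e)⁻¹ α β) = fun e => ((A e).det)⁻¹ * (A e).adjugate α β := by
    funext e
    rw [Matrix.inv_def, Matrix.smul_apply, Ring.inverse_eq_inv', smul_eq_mul]
  rw [this]
  exact (hdet'.inv hdet).mul hadj

theorem spray_smooth (hF : IsFinslerMetric U FF) (hx : x ∈ U) (i : κ) :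
    ContDiffOn ℝ (⊤ : ℕ∞) (fun y' => spray FF i x y') {y' : κ→ℝ | y' ≠ 0} := by
  have hinv : ∀ β, ContDiffOn ℝ (⊤ : ℕ∞) (fun y' => (fundTensor FF x y')⁻¹ i β)
      {y' : κ→ℝ | y' ≠ 0} := by
    intro β
    refine inv_entry_smooth (fun k l => fund_entry_smooth hF hx k l) ?_ i β
    intro y' hy'
    exact ne_of_gt (hF.posDef x hx y' hy').det_pos
  have hcoord : ∀ γ : κ, ContDiffOn ℝ (⊤ : ℕ∞) (fun y' : κ→ℝ => y' γ)
      {y' : κ→ℝ | y' ≠ 0} := fun γ => (contDiff_apply ℝ ℝ γ).contDiffOn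
  have hV : ∀ β, ContDiffOn ℝ (⊤ : ℕ∞) (fun y' =>
      (∑ γ, pdx (pdy (fun a b => FF a b ^ 2) β) γ x y' * y' γ)
        - pdx (fun a b => FF a b ^ 2) β x y') {y' : κ→ℝ | y' ≠ 0} := by
    intro β
    refine ContDiffOn.sub ?_ (dx_entry_smooth hF hx β)
    refine ContDiffOn.sum fun γ _ => ?_
    exact (cxy_entry_smooth hF hx β γ).mul (hcoord γ)
  have : (fun y' => spray FF i x y') = fun y' => (1/2 : ℝ) *
      ∑ β, (fundTensor FF x y')⁻¹ i β *
        ((∑ γ, pdx (pdy (fun a b => FF a b ^ 2) β) γ x y' * y' γ)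
          - pdx (fun a b => FF a b ^ 2) β x y') := by
    funext y'
    rw [spray]
  rw [this]
  refine ContDiffOn.mul contDiffOn_const ?_
  exact ContDiffOn.sum fun β _ => (hinv β).mul (hV β)
end Smooth2

section Final
variable {m n : ℕ}
  {U₁ : Set (Fin m → ℝ)} {U₂ : Set (Fin n → ℝ)}
  {F₁ : (Fin m → ℝ) → (Fin m → ℝ) → ℝ} {F₂ : (Fin n → ℝ) → (Fin n → ℝ) → ℝ}
  {f : ℝ → ℝ → ℝ}
  {F : (Fin m ⊕ Fin n → ℝ) → (Fin m ⊕ Fin n → ℝ) → ℝ}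
  {x : Fin m ⊕ Fin n → ℝ}

theorem isOpen_O (m n : ℕ) : IsOpen {y' : Fin m ⊕ Fin n → ℝ |
    (y' ∘ Sum.inl) ≠ 0 ∧ (y' ∘ Sum.inr) ≠ 0} := by
  have h1 : IsOpen ((resL m n) ⁻¹' {z : Fin m → ℝ | z ≠ 0}) :=
    isOpen_ne.preimage (resL m n).continuous
  have h2 : IsOpen ((resR m n) ⁻¹' {z : Fin n → ℝ | z ≠ 0}) :=
    isOpen_ne.preimage (resR m n).continuous
  exact h1.inter h2

theorem nl_transfer_L (hprod : IsMinkowskianProduct U₁ U₂ F₁ F₂ f F)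
    (hx1 : x ∘ Sum.inl ∈ U₁) (hx2 : x ∘ Sum.inr ∈ U₂) (i : Fin m) (γ : Fin m ⊕ Fin n)
    {y' : Fin m ⊕ Fin n → ℝ} (hy1' : y' ∘ Sum.inl ≠ 0) (hy2' : y' ∘ Sum.inr ≠ 0) :
    pdy (spray F (Sum.inl i)) γ x y' =
      fderiv ℝ (spray F₁ i (x ∘ Sum.inl)) (y' ∘ Sum.inl)
        ((Pi.single γ (1:ℝ) : (Fin m ⊕ Fin n) → ℝ) ∘ Sum.inl) := by
  have hev : (spray F (Sum.inl i) x) =ᶠ[nhds y']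
      fun y'' => spray F₁ i (x ∘ Sum.inl) (resL m n y'') := by
    filter_upwards [(isOpen_O m n).mem_nhds ⟨hy1', hy2'⟩] with z hz
    exact spray_split hprod hx1 hx2 hz.1 hz.2 (Sum.inl i)
  have hdiff : DifferentiableAt ℝ (spray F₁ i (x ∘ Sum.inl)) (resL m n y') :=
    ((spray_smooth hprod.finsler₁ hx1 i).differentiableOn (by norm_num)).differentiableAt
      (isOpen_ne.mem_nhds hy1')
  show fderiv ℝ (spray F (Sum.inl i) x) y' (Pi.single γ 1) = _
  rw [Filter.EventuallyEq.fderiv_eq (𝕜 := ℝ) hev]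
  exact fderiv_clm_comp' hdiff (Pi.single γ 1)

theorem nl_transfer_R (hprod : IsMinkowskianProduct U₁ U₂ F₁ F₂ f F)
    (hx1 : x ∘ Sum.inl ∈ U₁) (hx2 : x ∘ Sum.inr ∈ U₂) (i : Fin n) (γ : Fin m ⊕ Fin n)
    {y' : Fin m ⊕ Fin n → ℝ} (hy1' : y' ∘ Sum.inl ≠ 0) (hy2' : y' ∘ Sum.inr ≠ 0) :
    pdy (spray F (Sum.inr i)) γ x y' =
      fderiv ℝ (spray F₂ i (x ∘ Sum.inr)) (y' ∘ Sum.inr)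
        ((Pi.single γ (1:ℝ) : (Fin m ⊕ Fin n) → ℝ) ∘ Sum.inr) := by
  have hev : (spray F (Sum.inr i) x) =ᶠ[nhds y']
      fun y'' => spray F₂ i (x ∘ Sum.inr) (resR m n y'') := by
    filter_upwards [(isOpen_O m n).mem_nhds ⟨hy1', hy2'⟩] with z hz
    exact spray_split hprod hx1 hx2 hz.1 hz.2 (Sum.inr i)
  have hdiff : DifferentiableAt ℝ (spray F₂ i (x ∘ Sum.inr)) (resR m n y') :=
    ((spray_smooth hprod.finsler₂ hx2 i).differentiableOn (by norm_num)).differentiableAt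
      (isOpen_ne.mem_nhds hy2')
  show fderiv ℝ (spray F (Sum.inr i) x) y' (Pi.single γ 1) = _
  rw [Filter.EventuallyEq.fderiv_eq (𝕜 := ℝ) hev]
  exact fderiv_clm_comp' hdiff (Pi.single γ 1)

end Final


/-- The Berwald connection coefficients of a Minkowskian product Finsler metric
split: `Γ̌^i_{j;l} = Γ̌₁^i_{j;l}`, `Γ̌^{i'}_{j';l'} = Γ̌₂^{i'}_{j';l'}`, and all
mixed coefficients vanish. -/
theorem berwaldConn_of_minkowskian_product {m n : ℕ}
    (U₁ : Set (Fin m → ℝ)) (U₂ : Set (Fin n → ℝ))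
    (F₁ : (Fin m → ℝ) → (Fin m → ℝ) → ℝ) (F₂ : (Fin n → ℝ) → (Fin n → ℝ) → ℝ)
    (f : ℝ → ℝ → ℝ) (F : (Fin m ⊕ Fin n → ℝ) → (Fin m ⊕ Fin n → ℝ) → ℝ)
    (hprod : IsMinkowskianProduct U₁ U₂ F₁ F₂ f F) :
    ∀ x : Fin m ⊕ Fin n → ℝ, (x ∘ Sum.inl) ∈ U₁ → (x ∘ Sum.inr) ∈ U₂ →
    ∀ y : Fin m ⊕ Fin n → ℝ, (y ∘ Sum.inl) ≠ 0 → (y ∘ Sum.inr) ≠ 0 →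
      (∀ i j l : Fin m,
        berwaldConn F (Sum.inl i) (Sum.inl j) (Sum.inl l) x y =
          berwaldConn F₁ i j l (x ∘ Sum.inl) (y ∘ Sum.inl)) ∧
      (∀ i' j' l' : Fin n,
        berwaldConn F (Sum.inr i') (Sum.inr j') (Sum.inr l') x y =
          berwaldConn F₂ i' j' l' (x ∘ Sum.inr) (y ∘ Sum.inr)) ∧
      (∀ (i : Fin m) (j' : Fin n) (l : Fin m),
        berwaldConn F (Sum.inl i) (Sum.inr j') (Sum.inl l) x y = 0) ∧
      (∀ (i : Fin m) (j : Fin m) (l' : Fin n),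
        berwaldConn F (Sum.inl i) (Sum.inl j) (Sum.inr l') x y = 0) ∧
      (∀ (i : Fin m) (j' : Fin n) (l' : Fin n),
        berwaldConn F (Sum.inl i) (Sum.inr j') (Sum.inr l') x y = 0) ∧
      (∀ (i' : Fin n) (j' : Fin n) (l : Fin m),
        berwaldConn F (Sum.inr i') (Sum.inr j') (Sum.inl l) x y = 0) ∧
      (∀ (i' : Fin n) (j : Fin m) (l' : Fin n),
        berwaldConn F (Sum.inr i') (Sum.inl j) (Sum.inr l') x y = 0) ∧
      (∀ (i' : Fin n) (j : Fin m) (l : Fin m),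
        berwaldConn F (Sum.inr i') (Sum.inl j) (Sum.inl l) x y = 0) := by
  intro x hx1 hx2 y hy1 hy2
  have hOmem : {y' : Fin m ⊕ Fin n → ℝ | (y' ∘ Sum.inl) ≠ 0 ∧ (y' ∘ Sum.inr) ≠ 0}
      ∈ nhds y := (isOpen_O m n).mem_nhds ⟨hy1, hy2⟩
  -- eventual representations of the nonlinear connection coefficients, first block
  have hevL : ∀ (i l : Fin m), (nonlinConn F (Sum.inl i) (Sum.inl l) x) =ᶠ[nhds y]
      fun y'' => fderiv ℝ (spray F₁ i (x ∘ Sum.inl)) (y'' ∘ Sum.inl) (Pi.single l 1) := by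
    intro i l
    filter_upwards [hOmem] with z hz
    have := nl_transfer_L hprod hx1 hx2 i (Sum.inl l) hz.1 hz.2
    rwa [single_inl_comp_inl] at this
  have hevL0 : ∀ (i : Fin m) (l' : Fin n),
      (nonlinConn F (Sum.inl i) (Sum.inr l') x) =ᶠ[nhds y] fun _ => (0:ℝ) := by
    intro i l'
    filter_upwards [hOmem] with z hz
    have := nl_transfer_L hprod hx1 hx2 i (Sum.inr l') hz.1 hz.2
    rwa [single_inr_comp_inl, fderiv_apply_zero_vec] at this
  have hevR : ∀ (i l : Fin n), (nonlinConn F (Sum.inr i) (Sum.inr l) x) =ᶠ[nhds y]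
      fun y'' => fderiv ℝ (spray F₂ i (x ∘ Sum.inr)) (y'' ∘ Sum.inr) (Pi.single l 1) := by
    intro i l
    filter_upwards [hOmem] with z hz
    have := nl_transfer_R hprod hx1 hx2 i (Sum.inr l) hz.1 hz.2
    rwa [single_inr_comp_inr] at this
  have hevR0 : ∀ (i : Fin n) (l : Fin m),
      (nonlinConn F (Sum.inr i) (Sum.inl l) x) =ᶠ[nhds y] fun _ => (0:ℝ) := by
    intro i l
    filter_upwards [hOmem] with z hz
    have := nl_transfer_R hprod hx1 hx2 i (Sum.inl l) hz.1 hz.2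
    rwa [single_inl_comp_inr, fderiv_apply_zero_vec] at this
  -- differentiability of the factor nonlinear connections
  have hτ1 : ∀ (i l : Fin m), DifferentiableAt ℝ
      (fun z => fderiv ℝ (spray F₁ i (x ∘ Sum.inl)) z (Pi.single l 1)) (y ∘ Sum.inl) :=
    fun i l =>
    ((contDiffOn_fderiv_apply (spray_smooth hprod.finsler₁ hx1 i) isOpen_ne
      (Pi.single l 1)).differentiableOn (by norm_num)).differentiableAt
      (isOpen_ne.mem_nhds hy1)
  have hτ2 : ∀ (i l : Fin n), DifferentiableAt ℝ
      (fun z => fderiv ℝ (spray F₂ i (x ∘ Sum.inr)) z (Pi.single l 1)) (y ∘ Sum.inr) :=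
    fun i l =>
    ((contDiffOn_fderiv_apply (spray_smooth hprod.finsler₂ hx2 i) isOpen_ne
      (Pi.single l 1)).differentiableOn (by norm_num)).differentiableAt
      (isOpen_ne.mem_nhds hy2)
  -- the composition computations
  have keyL : ∀ (i l : Fin m) (β : Fin m ⊕ Fin n),
      berwaldConn F (Sum.inl i) β (Sum.inl l) x y =
        fderiv ℝ (fun z => fderiv ℝ (spray F₁ i (x ∘ Sum.inl)) z (Pi.single l 1))
          (y ∘ Sum.inl) ((Pi.single β (1:ℝ) : (Fin m ⊕ Fin n) → ℝ) ∘ Sum.inl) := by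
    intro i l β
    show fderiv ℝ (nonlinConn F (Sum.inl i) (Sum.inl l) x) y (Pi.single β 1) = _
    rw [Filter.EventuallyEq.fderiv_eq (𝕜 := ℝ) (hevL i l)]
    have : (fun y'' : Fin m ⊕ Fin n → ℝ =>
        fderiv ℝ (spray F₁ i (x ∘ Sum.inl)) (y'' ∘ Sum.inl) (Pi.single l 1)) =
        fun y'' => (fun z => fderiv ℝ (spray F₁ i (x ∘ Sum.inl)) z (Pi.single l 1))
          (resL m n y'') := rfl
    rw [this]
    exact fderiv_clm_comp' (L := resL m n) (p := y) (hτ1 i l) (Pi.single β 1)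
  have keyR : ∀ (i l : Fin n) (β : Fin m ⊕ Fin n),
      berwaldConn F (Sum.inr i) β (Sum.inr l) x y =
        fderiv ℝ (fun z => fderiv ℝ (spray F₂ i (x ∘ Sum.inr)) z (Pi.single l 1))
          (y ∘ Sum.inr) ((Pi.single β (1:ℝ) : (Fin m ⊕ Fin n) → ℝ) ∘ Sum.inr) := by
    intro i l β
    show fderiv ℝ (nonlinConn F (Sum.inr i) (Sum.inr l) x) y (Pi.single β 1) = _
    rw [Filter.EventuallyEq.fderiv_eq (𝕜 := ℝ) (hevR i l)]
    have : (fun y'' : Fin m ⊕ Fin n → ℝ =>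
        fderiv ℝ (spray F₂ i (x ∘ Sum.inr)) (y'' ∘ Sum.inr) (Pi.single l 1)) =
        fun y'' => (fun z => fderiv ℝ (spray F₂ i (x ∘ Sum.inr)) z (Pi.single l 1))
          (resR m n y'') := rfl
    rw [this]
    exact fderiv_clm_comp' (L := resR m n) (p := y) (hτ2 i l) (Pi.single β 1)
  have keyL0 : ∀ (i : Fin m) (l' : Fin n) (β : Fin m ⊕ Fin n),
      berwaldConn F (Sum.inl i) β (Sum.inr l') x y = 0 := by
    intro i l' β
    show fderiv ℝ (nonlinConn F (Sum.inl i) (Sum.inr l') x) y (Pi.single β 1) = 0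
    rw [Filter.EventuallyEq.fderiv_eq (𝕜 := ℝ) (hevL0 i l'), fderiv_fun_const]
    rfl
  have keyR0 : ∀ (i : Fin n) (l : Fin m) (β : Fin m ⊕ Fin n),
      berwaldConn F (Sum.inr i) β (Sum.inl l) x y = 0 := by
    intro i l β
    show fderiv ℝ (nonlinConn F (Sum.inr i) (Sum.inl l) x) y (Pi.single β 1) = 0
    rw [Filter.EventuallyEq.fderiv_eq (𝕜 := ℝ) (hevR0 i l), fderiv_fun_const]
    rfl
  refine ⟨?_, ?_, ?_, ?_, ?_, ?_, ?_, ?_⟩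
  · intro i j l
    rw [keyL i l (Sum.inl j), single_inl_comp_inl]
    rfl
  · intro i j l
    rw [keyR i l (Sum.inr j), single_inr_comp_inr]
    rfl
  · intro i j' l
    rw [keyL i l (Sum.inr j'), single_inr_comp_inl, fderiv_apply_zero_vec]
  · intro i j l'
    exact keyL0 i l' (Sum.inl j)
  · intro i j' l'
    exact keyL0 i l' (Sum.inr j')
  · intro i' j' l
    exact keyR0 i' l (Sum.inr j')
  · intro i' j l'
    rw [keyR i' l' (Sum.inl j), single_inl_comp_inr, fderiv_apply_zero_vec]
  · intro i' j l
    exact keyR0 i' l (Sum.inl j)
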